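/- arXiv:2005.05500 — 5 statements merged into one kernel-verified Lean document; each statement's English description precedes it below -/
import Mathlib

section
/- For every positive integer m and every complex number z with |z| ≤ 1, the m-th cyclotomic polynomial satisfies log|Φ_m(z)| ≤ 2^{ω(m)} · log(π m), where ω(m) is the number of distinct prime divisors of m. -/
open Polynomial Finset Real ArithmeticFunction
open scoped ArithmeticFunction.Moebius ArithmeticFunction.zeta

namespace CycloAux


lemma abs_sin_le_abs' {x : ℝ} (h : 0 ≤ x) : |Real.sin x| ≤ x := by
  rcases le_or_gt x 1 with h1 | h1
  · rw [abs_of_nonneg (Real.sin_nonneg_of_nonneg_of_le_pi h (by linarith [Real.pi_gt_three]))]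
    exact Real.sin_le h
  · exact le_trans (Real.abs_sin_le_one x) (by linarith)

lemma abs_sin_le_abs (x : ℝ) : |Real.sin x| ≤ |x| := by
  rcases le_or_gt 0 x with h | h
  · rw [abs_of_nonneg h]; exact abs_sin_le_abs' h
  · rw [abs_of_neg h]
    calc |Real.sin x| = |Real.sin (-x)| := by rw [Real.sin_neg, abs_neg]
      _ ≤ -x := abs_sin_le_abs' (by linarith)

lemma abs_sin_eq_sin_abs {y : ℝ} (h : |y| ≤ π) : |Real.sin y| = Real.sin |y| := by
  rcases le_or_gt 0 y with hy | hy
  · rw [abs_of_nonneg hy, abs_of_nonneg (Real.sin_nonneg_of_nonneg_of_le_pi hy (le_trans (le_abs_self y) h))]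
  · have h' : -π ≤ y := by rw [abs_of_neg hy] at h; linarith
    rw [abs_of_neg hy, abs_of_nonpos (Real.sin_nonpos_of_nonpos_of_neg_pi_le hy.le h'),
      ← Real.sin_neg]

/-- lower bound for sin via Jordan -/
lemma sin_ge_of_le_half {t : ℝ} (h0 : 0 ≤ t) (h : t ≤ 1/2) : 2 * t ≤ Real.sin (π * t) := by
  have hπ := Real.pi_gt_three
  have h2 := Real.mul_le_sin (x := π * t) (by positivity) (by nlinarith)
  calc 2*t = 2/π * (π * t) := by field_simp
    _ ≤ Real.sin (π * t) := h2


lemma cos_eq_one_sub_two_sin_sq (x : ℝ) : Real.cos x = 1 - 2 * Real.sin (x/2)^2 := by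
  have h1 : Real.cos (2*(x/2)) = 2 * Real.cos (x/2)^2 - 1 := Real.cos_two_mul _
  have h2 := Real.sin_sq_add_cos_sq (x/2)
  rw [show 2*(x/2) = x by ring] at h1; linarith

lemma sq_abs_pow_sub_one (z : ℂ) (a : ℕ) :
    (‖z ^ a - 1‖)^2
      = (1 - ‖z‖ ^ a)^2
        + ‖z‖ ^ a * (2 * Real.sin (a * z.arg / 2))^2 := by
  have hz : ((‖z‖ : ℂ)) * Complex.exp (z.arg * Complex.I) = z :=
    Complex.norm_mul_exp_arg_mul_I z
  have hpow : z ^ a = (‖z‖ ^ a : ℝ) * Complex.exp ((a * z.arg : ℝ) * Complex.I) := by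
    conv_lhs => rw [← hz]
    rw [mul_pow, ← Complex.exp_nat_mul]
    push_cast
    ring_nf
  rw [Complex.sq_norm, hpow, Complex.exp_mul_I]
  have hre : ((‖z‖ ^ a : ℝ) * (Complex.cos (a * z.arg : ℝ) + Complex.sin (a * z.arg : ℝ) * Complex.I) - 1).re
      = ‖z‖ ^ a * Real.cos (a * z.arg) - 1 := by
    simp [Complex.cos_ofReal_re, Complex.sin_ofReal_re, Complex.cos_ofReal_im, Complex.sin_ofReal_im, ← Complex.ofReal_pow, ← Complex.ofReal_natCast, ← Complex.ofReal_mul]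
  have him : ((‖z‖ ^ a : ℝ) * (Complex.cos (a * z.arg : ℝ) + Complex.sin (a * z.arg : ℝ) * Complex.I) - 1).im
      = ‖z‖ ^ a * Real.sin (a * z.arg) := by
    simp [Complex.cos_ofReal_re, Complex.sin_ofReal_re, Complex.cos_ofReal_im, Complex.sin_ofReal_im, ← Complex.ofReal_pow, ← Complex.ofReal_natCast, ← Complex.ofReal_mul]
  rw [Complex.normSq_apply, hre, him]
  have hc := cos_eq_one_sub_two_sin_sq (a * z.arg)
  have hs := Real.sin_sq_add_cos_sq (a * z.arg)
  set c := Real.cos (a * z.arg)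
  set s := Real.sin (a * z.arg)
  set t := Real.sin (a * z.arg / 2)
  set R := ‖z‖ ^ a
  linear_combination (R^2) * hs + (-2*R) * hc

end CycloAux

namespace CycloAux2
open CycloAux

lemma W_bounds {z : ℂ} (hz : ‖z‖ ≤ 1) (a : ℕ) :
    ‖z^a - 1‖ ≤ (1 - ‖z‖^a) + 2*|Real.sin (a*z.arg/2)| ∧
    ((1 - ‖z‖^a) + 2*|Real.sin (a*z.arg/2)|)/4 ≤ ‖z^a - 1‖ := by
  have hρ0 : 0 ≤ ‖z‖ := norm_nonneg z
  have hR0 : (0:ℝ) ≤ ‖z‖ ^ a := by positivity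
  have hR1 : ‖z‖ ^ a ≤ 1 := pow_le_one₀ hρ0 hz
  have hid := sq_abs_pow_sub_one z a
  have hW0 : 0 ≤ ‖z^a - 1‖ := norm_nonneg _
  set W := ‖z^a - 1‖
  set R := ‖z‖ ^ a
  set t := Real.sin (a*z.arg/2)
  have hv : (2*|t|)^2 = (2*t)^2 := by
    rw [mul_pow, mul_pow, sq_abs]
  have ht2 : (0:ℝ) ≤ |t| := abs_nonneg t
  have ht1 : |t| ≤ 1 := Real.abs_sin_le_one _
  constructor
  · nlinarith [hid, sq_nonneg ((1-R) + 2*|t| - W), sq_nonneg ((1-R) + 2*|t| + W)]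
  · rcases le_or_gt (1/4 : ℝ) R with h4 | h4
    · nlinarith [hid, sq_nonneg ((1-R) - 2*|t|), sq_nonneg W]
    · nlinarith [hid, sq_nonneg (2*t), sq_nonneg W]

lemma u_mono {ρ : ℝ} (h0 : 0 ≤ ρ) (h1 : ρ ≤ 1) {a : ℕ} (ha : 1 ≤ a) :
    1 - ρ ≤ 1 - ρ^a := by
  have h := pow_le_pow_of_le_one h0 h1 ha
  rw [pow_one] at h; linarith

lemma u_le {ρ : ℝ} (h1 : ρ ≤ 1) (h0 : 0 ≤ ρ) (a : ℕ) :
    1 - ρ^a ≤ a * (1 - ρ) := by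
  have h := one_add_mul_le_pow (a := ρ - 1) (by linarith) a
  have : (1 + (ρ - 1)) ^ a = ρ ^ a := by ring_nf
  nlinarith [h]

lemma sin_pi_abs_round (x : ℝ) :
    |Real.sin (π * x)| = Real.sin (π * |x - round x|) := by
  have h1 : π * x = π * (x - round x) + (round x) * π := by ring
  rw [h1, Real.sin_add_int_mul_pi, abs_mul]
  have hpm : |((-1:ℝ)) ^ round x| = 1 := by
    rcases Int.even_or_odd (round x) with he | ho
    · rw [he.neg_one_zpow]; simp
    · rw [ho.neg_one_zpow]; simp
  rw [hpm, one_mul]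
  have hle : |x - round x| ≤ 1/2 := abs_sub_round x
  have : |π * (x - round x)| ≤ π := by
    rw [abs_mul, abs_of_nonneg Real.pi_pos.le]
    nlinarith [Real.pi_pos]
  rw [abs_sin_eq_sin_abs this, abs_mul, abs_of_nonneg Real.pi_pos.le]

lemma v_bounds (x : ℝ) :
    2*|x - round x| ≤ |Real.sin (π * x)| ∧ |Real.sin (π * x)| ≤ π * |x - round x| := by
  have h := sin_pi_abs_round x
  have hle : |x - round x| ≤ 1/2 := abs_sub_round x
  have h0 : (0:ℝ) ≤ |x - round x| := abs_nonneg _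
  constructor
  · rw [h]; exact sin_ge_of_le_half h0 hle
  · rw [h]
    calc Real.sin (π * |x - round x|) ≤ π * |x - round x| :=
      Real.sin_le (by positivity)

end CycloAux2

namespace CycloAux5
open CycloAux

set_option maxHeartbeats 1000000 in
lemma class_setup (ν : ℝ) (m a0 : ℕ) (ha0 : a0 ≠ 0) (ha0m : a0 ≤ m)
    (hsmall : |(a0:ℝ)*ν - round ((a0:ℝ)*ν)| < 1/(2*m)) :
    ∃ (q : ℕ) (Δ : ℝ), q ≠ 0 ∧ q ∣ a0 ∧ 0 ≤ Δ ∧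
      Δ ≤ |(a0:ℝ)*ν - round ((a0:ℝ)*ν)| ∧
      (∀ a : ℕ, a ≠ 0 → a ≤ m → q ∣ a →
        |Real.sin (π*(a*ν))| ≤ π*(m*Δ) ∧ 2*Δ ≤ |Real.sin (π*(a*ν))|) ∧
      (∀ a : ℕ, a ≠ 0 → a ≤ m → ¬ q ∣ a →
        1/(2*m) ≤ |(a:ℝ)*ν - round ((a:ℝ)*ν)|) := by
  have hm : m ≠ 0 := fun h => ha0 (by omega)
  have hmR : (0:ℝ) < m := by positivity
  set A0 : ℤ := round ((a0:ℝ)*ν) with hA0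
  set gg : ℕ := Int.gcd A0 (a0:ℤ) with hgg
  have hgg0 : gg ≠ 0 := by
    intro h
    rw [hgg] at h
    have := Int.gcd_eq_zero_iff.mp h
    exact ha0 (by exact_mod_cast this.2)
  have hggdvd : (gg:ℤ) ∣ (a0:ℤ) := Int.gcd_dvd_right _ _
  have hggdvdA : (gg:ℤ) ∣ A0 := Int.gcd_dvd_left _ _
  have hggdvdN : gg ∣ a0 := by exact_mod_cast hggdvd
  set q : ℕ := a0 / gg with hqdef
  set c : ℤ := A0 / gg with hcdef
  have hq0 : q ≠ 0 := by
    intro h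
    rw [hqdef] at h
    rcases (Nat.div_eq_zero_iff.mp h).resolve_left hgg0 with h'
    · exact absurd (Nat.le_of_dvd (Nat.pos_of_ne_zero ha0) hggdvdN) (by omega)
  have ha0eq : a0 = gg * q := (Nat.mul_div_cancel' hggdvdN).symm
  have hA0eq : A0 = gg * c := (Int.mul_ediv_cancel' hggdvdA).symm
  have hqa0 : q ∣ a0 := ⟨gg, by rw [ha0eq, Nat.mul_comm]⟩
  have hqR : (0:ℝ) < q := by positivity
  -- coprimality
  have hcop : Int.gcd c (q:ℤ) = 1 := by
    have h1 : 0 < Int.gcd A0 (a0:ℤ) := Nat.pos_of_ne_zero hgg0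
    have h2 := Int.gcd_div_gcd_div_gcd h1
    have h3 : (a0:ℤ) / (Int.gcd A0 (a0:ℤ)) = (q:ℤ) := by
      rw [← hgg]
      conv_lhs => rw [show (a0:ℤ) = (gg:ℤ) * q by exact_mod_cast ha0eq]
      exact Int.mul_ediv_cancel_left _ (by exact_mod_cast hgg0)
    rw [h3] at h2
    exact h2
  set δ : ℝ := ν - (c:ℝ)/q with hδdef
  have hkey : (a0:ℝ) * ((c:ℝ)/q) = (A0:ℝ) := by
    have hint : (a0:ℤ) * c = A0 * q := by
      rw [show (a0:ℤ) = (gg:ℤ) * q by exact_mod_cast ha0eq, hA0eq]; ring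
    field_simp
    rw [mul_comm (q:ℝ)]
    exact_mod_cast hint
  have ha0δ : (a0:ℝ)*ν - A0 = a0 * δ := by
    rw [hδdef]
    rw [mul_sub, hkey]
  have hΔh : |δ| ≤ |(a0:ℝ)*ν - A0| := by
    rw [ha0δ, abs_mul, abs_of_nonneg (by positivity : (0:ℝ) ≤ (a0:ℝ))]
    nlinarith [abs_nonneg δ, show (1:ℝ) ≤ (a0:ℝ) by exact_mod_cast Nat.one_le_iff_ne_zero.mpr ha0]
  refine ⟨q, |δ|, hq0, hqa0, abs_nonneg δ, hΔh, ?_, ?_⟩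
  · -- class bounds
    intro a ha ham hqa
    have haR1 : (1:ℝ) ≤ (a:ℝ) := by exact_mod_cast Nat.one_le_iff_ne_zero.mpr ha
    have hamR : (a:ℝ) ≤ (m:ℝ) := by exact_mod_cast ham
    -- a * ν = k + a * δ
    obtain ⟨b, hb⟩ := hqa
    have hk : (a:ℝ) * ((c:ℝ)/q) = ((b * c : ℤ) : ℝ) := by
      rw [hb]
      push_cast
      field_simp
    have haν : (a:ℝ) * ν = (a:ℝ)*δ + ((b*c : ℤ):ℝ) := by
      rw [hδdef, mul_sub, hk]; ring
    have hsin : |Real.sin (π*(a*ν))| = |Real.sin (π*((a:ℝ)*δ))| := by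
      rw [haν]
      rw [show π * ((a:ℝ)*δ + ((b*c : ℤ):ℝ)) = π*((a:ℝ)*δ) + ((b*c:ℤ):ℝ) * π by ring]
      rw [Real.sin_add_int_mul_pi, abs_mul]
      have : |((-1:ℝ)) ^ (b*c)| = 1 := by
        rcases Int.even_or_odd (b*c) with he | ho
        · rw [he.neg_one_zpow]; simp
        · rw [ho.neg_one_zpow]; simp
      rw [this, one_mul]
    -- |a δ| ≤ m Δ < 1/2
    have habs : |(a:ℝ)*δ| = (a:ℝ) * |δ| := by
      rw [abs_mul, abs_of_nonneg (by positivity : (0:ℝ) ≤ (a:ℝ))]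
    have hlt : (m:ℝ) * |δ| < 1/2 := by
      have := lt_of_le_of_lt hΔh hsmall
      calc (m:ℝ) * |δ| < m * (1/(2*m)) := by
            apply mul_lt_mul_of_pos_left _ hmR
            exact lt_of_le_of_lt hΔh hsmall
        _ = 1/2 := by field_simp
    have hle2 : (a:ℝ) * |δ| ≤ (m:ℝ) * |δ| := by
      apply mul_le_mul_of_nonneg_right hamR (abs_nonneg δ)
    constructor
    · rw [hsin]
      calc |Real.sin (π*((a:ℝ)*δ))| ≤ |π*((a:ℝ)*δ)| := abs_sin_le_abs _
        _ = π * ((a:ℝ)*|δ|) := by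
            rw [abs_mul, abs_of_nonneg Real.pi_pos.le, habs]
        _ ≤ π * (m*|δ|) := by
            apply mul_le_mul_of_nonneg_left _ Real.pi_pos.le
            exact le_trans hle2 (le_refl _)
    · rw [hsin]
      have hππ : |π*((a:ℝ)*δ)| ≤ π := by
        rw [abs_mul, abs_of_nonneg Real.pi_pos.le, habs]
        nlinarith [Real.pi_pos]
      rw [abs_sin_eq_sin_abs hππ]
      have heq : |π*((a:ℝ)*δ)| = π * ((a:ℝ)*|δ|) := by
        rw [abs_mul, abs_of_nonneg Real.pi_pos.le, habs]
      rw [heq]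
      have hge := sin_ge_of_le_half (t := (a:ℝ)*|δ|)
        (by positivity) (by nlinarith)
      nlinarith [abs_nonneg δ]
  · -- dichotomy
    intro a ha ham hqa
    have haR1 : (1:ℝ) ≤ (a:ℝ) := by exact_mod_cast Nat.one_le_iff_ne_zero.mpr ha
    have hamR : (a:ℝ) ≤ (m:ℝ) := by exact_mod_cast ham
    have ha0R : (a0:ℝ) ≤ (m:ℝ) := by exact_mod_cast ha0m
    set A : ℤ := round ((a:ℝ)*ν) with hA
    set t : ℤ := a * A0 - a0 * A with ht
    have htne : t ≠ 0 := by
      intro h0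
      rw [ht, sub_eq_zero] at h0
      -- a * A0 = a0 * A  ⇒  q ∣ a
      have h1 : (a:ℤ) * (gg * c) = (gg * q) * A := by
        rw [← hA0eq, ← show (a0:ℤ) = (gg:ℤ)*q by exact_mod_cast ha0eq]
        exact h0
      have h2 : (a:ℤ) * c = (q:ℤ) * A := by
        have hgZ : (gg:ℤ) ≠ 0 := by exact_mod_cast hgg0
        have := mul_left_cancel₀ hgZ (show (gg:ℤ) * ((a:ℤ)*c) = (gg:ℤ) * ((q:ℤ)*A) by ring_nf; ring_nf at h1; linarith [h1])
        exact this
      have hdvd : (q:ℤ) ∣ (a:ℤ) * c := ⟨A, h2⟩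
      have hcop' : Int.gcd (q:ℤ) c = 1 := by rw [Int.gcd_comm]; exact hcop
      have hdvd' : (q:ℤ) ∣ c * (a:ℤ) := by rw [mul_comm]; exact hdvd
      have : (q:ℤ) ∣ (a:ℤ) := Int.dvd_of_dvd_mul_right_of_gcd_one hdvd' hcop'
      exact hqa (by exact_mod_cast this)
    have h1le : (1:ℝ) ≤ |(t:ℝ)| := by
      have := Int.one_le_abs htne
      calc (1:ℝ) = ((1:ℤ):ℝ) := by norm_num
        _ ≤ ((|t|:ℤ):ℝ) := by exact_mod_cast this
        _ = |(t:ℝ)| := by push_cast; rfl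
    have halg : (t:ℝ) = (a:ℝ)*((A0:ℝ) - a0*ν) + (a0:ℝ)*((a:ℝ)*ν - A) := by
      rw [ht]; push_cast; ring
    have hbound : |(t:ℝ)| ≤ (a:ℝ)*|(a0:ℝ)*ν - A0| + (a0:ℝ)*|(a:ℝ)*ν - A| := by
      rw [halg]
      calc |(a:ℝ)*((A0:ℝ) - a0*ν) + (a0:ℝ)*((a:ℝ)*ν - A)|
          ≤ |(a:ℝ)*((A0:ℝ) - a0*ν)| + |(a0:ℝ)*((a:ℝ)*ν - A)| := abs_add_le _ _
        _ = (a:ℝ)*|(A0:ℝ) - a0*ν| + (a0:ℝ)*|(a:ℝ)*ν - A| := by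
            rw [abs_mul, abs_mul, abs_of_nonneg (by positivity : (0:ℝ) ≤ (a:ℝ)),
              abs_of_nonneg (by positivity : (0:ℝ) ≤ (a0:ℝ))]
        _ = (a:ℝ)*|(a0:ℝ)*ν - A0| + (a0:ℝ)*|(a:ℝ)*ν - A| := by
            rw [abs_sub_comm]
    have hs : |(a0:ℝ)*ν - A0| < 1/(2*m) := hsmall
    have h2 : (a:ℝ)*|(a0:ℝ)*ν - A0| ≤ (m:ℝ)*(1/(2*m)) := by
      apply mul_le_mul hamR hs.le (abs_nonneg _) hmR.le
    have h3 : (a0:ℝ)*|(a:ℝ)*ν - A| ≤ (m:ℝ)*|(a:ℝ)*ν - A| := by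
      apply mul_le_mul_of_nonneg_right ha0R (abs_nonneg _)
    have h4 : (m:ℝ)*(1/(2*m)) = 1/2 := by field_simp
    have h5 : (1:ℝ) ≤ 1/2 + (m:ℝ)*|(a:ℝ)*ν - A| := by
      calc (1:ℝ) ≤ |(t:ℝ)| := h1le
        _ ≤ (a:ℝ)*|(a0:ℝ)*ν - A0| + (a0:ℝ)*|(a:ℝ)*ν - A| := hbound
        _ ≤ 1/2 + (m:ℝ)*|(a:ℝ)*ν - A| := by rw [← h4]; linarith
    have h6 : 1/2 ≤ (m:ℝ)*|(a:ℝ)*ν - A| := by linarith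
    rw [div_le_iff₀ (by positivity : (0:ℝ) < 2*(m:ℝ))]
    nlinarith [h6]

end CycloAux5


namespace CycloAux3

lemma sum_moebius_divisors (n : ℕ) :
    (∑ d ∈ n.divisors, μ d) = if n = 1 then 1 else 0 := by
  have h : (μ * (ζ : ArithmeticFunction ℤ)) n = (1 : ArithmeticFunction ℤ) n := by
    rw [moebius_mul_coe_zeta]
  rw [mul_apply, one_apply] at h
  rw [← h, ← Nat.sum_divisorsAntidiagonal (fun d e => (μ d : ℤ))]
  refine Finset.sum_congr rfl fun x hx => ?_
  have hx2 : x.2 ≠ 0 :=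
    (Nat.pos_of_mem_divisors (Nat.snd_mem_divisors_of_mem_antidiagonal hx)).ne'
  rw [natCoe_apply, zeta_apply_ne hx2]
  simp

lemma sum_moebius_card (s : Finset ℕ) :
    ∑ d ∈ s, (μ d) = ((s.filter fun d => μ d = 1).card : ℤ)
      - ((s.filter fun d => μ d = -1).card : ℤ) := by
  rw [← Finset.sum_filter_add_sum_filter_not s (fun d => μ d = 1)]
  have h1 : ∑ d ∈ s.filter (fun d => μ d = 1), μ d
      = ((s.filter fun d => μ d = 1).card : ℤ) := by
    rw [Finset.sum_congr rfl (fun d hd => (Finset.mem_filter.mp hd).2)]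
    simp
  have hsub : (s.filter fun d => ¬ μ d = 1).filter (fun d => μ d = -1)
      = s.filter (fun d => μ d = -1) := by
    ext d
    simp only [Finset.mem_filter]
    constructor
    · rintro ⟨⟨hs, _⟩, h2⟩; exact ⟨hs, h2⟩
    · rintro ⟨hs, h2⟩; refine ⟨⟨hs, ?_⟩, h2⟩; rw [h2]; decide
  have h2 : ∑ d ∈ s.filter (fun d => ¬ μ d = 1), μ d
      = -(((s.filter fun d => μ d = -1).card : ℤ)) := by
    rw [← Finset.sum_filter_add_sum_filter_not (s.filter (fun d => ¬ μ d = 1))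
      (fun d => μ d = -1), hsub]
    have ha : ∑ d ∈ s.filter (fun d => μ d = -1), μ d
        = -(((s.filter fun d => μ d = -1).card : ℤ)) := by
      rw [Finset.sum_congr rfl (fun d hd => (Finset.mem_filter.mp hd).2)]
      simp
    have hb : ∑ d ∈ (s.filter (fun d => ¬ μ d = 1)).filter (fun d => ¬ μ d = -1), μ d = 0 := by
      refine Finset.sum_eq_zero fun d hd => ?_
      simp only [Finset.mem_filter] at hd
      by_contra h0
      rcases moebius_ne_zero_iff_eq_or.mp h0 with h | h
      · exact hd.1.2 h
      · exact hd.2 h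
    rw [ha, hb, add_zero]
  rw [h1, h2]
  ring

lemma card_eq_of_ne_one {n : ℕ} (hn : n ≠ 1) :
    (n.divisors.filter fun d => μ d = 1).card = (n.divisors.filter fun d => μ d = -1).card := by
  have h := sum_moebius_card n.divisors
  rw [sum_moebius_divisors, if_neg hn] at h
  omega

lemma card_sq_le (m : ℕ) (hm : m ≠ 0) :
    (m.divisors.filter fun d => μ d = 1).card
      + (m.divisors.filter fun d => μ d = -1).card ≤ 2 ^ m.primeFactors.card := by
  have hdisj : Disjoint (m.divisors.filter fun d => μ d = 1)
      (m.divisors.filter fun d => μ d = -1) := by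
    refine Finset.disjoint_left.mpr fun d h1 h2 => ?_
    have e1 := (Finset.mem_filter.mp h1).2
    have e2 := (Finset.mem_filter.mp h2).2
    omega
  rw [← Finset.card_union_of_disjoint hdisj]
  have hsub : (m.divisors.filter fun d => μ d = 1) ∪ (m.divisors.filter fun d => μ d = -1)
      ⊆ m.divisors.filter fun d => μ d ≠ 0 := by
    intro d hd
    rcases Finset.mem_union.mp hd with h | h <;>
      [skip; skip] <;>
      · have := Finset.mem_filter.mp h
        refine Finset.mem_filter.mpr ⟨this.1, ?_⟩
        omega
  refine le_trans (Finset.card_le_card hsub) ?_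
  rw [← Finset.card_powerset]
  refine Finset.card_le_card_of_injOn (fun d => d.primeFactors) ?_ ?_
  · intro d hd
    have hmem := Finset.mem_filter.mp hd
    exact Finset.mem_powerset.mpr
      (Nat.primeFactors_mono (Nat.dvd_of_mem_divisors hmem.1) hm)
  · intro d1 h1 d2 h2 hf
    have s1 : Squarefree d1 := moebius_ne_zero_iff_squarefree.mp (Finset.mem_filter.mp h1).2
    have s2 : Squarefree d2 := moebius_ne_zero_iff_squarefree.mp (Finset.mem_filter.mp h2).2
    rw [← Nat.prod_primeFactors_of_squarefree s1, ← Nat.prod_primeFactors_of_squarefree s2]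
    simp only at hf
    rw [hf]

end CycloAux3


namespace CycloAux4

variable {m : ℕ} {z : ℂ}

lemma pow_ne_one_of_dvd (hzm : z ^ m ≠ 1) {a : ℕ} (ha : a ∣ m) : z ^ a ≠ 1 := by
  intro h
  apply hzm
  rw [← Nat.mul_div_cancel' ha, pow_mul, h, one_pow]

lemma cyclotomic_eval_ne_zero (hzm : z ^ m ≠ 1) {n : ℕ} (hn : n ∣ m) :
    (cyclotomic n ℂ).eval z ≠ 0 := by
  intro h
  have hdvd : (cyclotomic n ℂ).eval z ∣ (X ^ n - 1 : ℂ[X]).eval z :=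
    Polynomial.eval_dvd (cyclotomic.dvd_X_pow_sub_one n ℂ)
  rw [h] at hdvd
  have h0 : (X ^ n - 1 : ℂ[X]).eval z = 0 := zero_dvd_iff.mp hdvd
  simp only [Polynomial.eval_sub, Polynomial.eval_pow, Polynomial.eval_X,
    Polynomial.eval_one, sub_eq_zero] at h0
  exact pow_ne_one_of_dvd hzm hn h0

lemma moebius_prod_eq (hm : m ≠ 0) (hzm : z ^ m ≠ 1) :
    (∏ x ∈ m.divisorsAntidiagonal, (z ^ x.2 - 1) ^ (μ x.1)) = (cyclotomic m ℂ).eval z := by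
  set f : ℕ → ℂ := fun n => if z ^ n = 1 then 1 else (cyclotomic n ℂ).eval z with hf
  set g : ℕ → ℂ := fun n => if z ^ n = 1 then 1 else z ^ n - 1 with hg
  have hf0 : ∀ n > 0, f n ≠ 0 := by
    intro n hn
    simp only [hf]
    split_ifs with h
    · exact one_ne_zero
    · intro hc
      have : (cyclotomic n ℂ).eval z ∣ (X ^ n - 1 : ℂ[X]).eval z :=
        Polynomial.eval_dvd (cyclotomic.dvd_X_pow_sub_one n ℂ)
      rw [hc] at this
      have h0 : (X ^ n - 1 : ℂ[X]).eval z = 0 := zero_dvd_iff.mp this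
      simp only [Polynomial.eval_sub, Polynomial.eval_pow, Polynomial.eval_X,
        Polynomial.eval_one, sub_eq_zero] at h0
      exact h h0
  have hg0 : ∀ n > 0, g n ≠ 0 := by
    intro n hn
    simp only [hg]
    split_ifs with h
    · exact one_ne_zero
    · exact sub_ne_zero.mpr h
  have hmain := (prod_eq_iff_prod_pow_moebius_eq_on_of_nonzero
    {n | n ∣ m} (fun a b hab hb => dvd_trans hab hb) hf0 hg0).mp ?_ m
    (Nat.pos_of_ne_zero hm) (dvd_refl m)
  · rw [hf] at hmain
    simp only [if_neg hzm] at hmain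
    rw [← hmain]
    refine Finset.prod_congr rfl fun x hx => ?_
    have hx2 : x.2 ∣ m := Nat.dvd_of_mem_divisors (Nat.snd_mem_divisors_of_mem_antidiagonal hx)
    simp only [hg, if_neg (pow_ne_one_of_dvd hzm hx2)]
  · intro n hn hnm
    have hzn : z ^ n ≠ 1 := pow_ne_one_of_dvd hzm hnm
    simp only [hg, if_neg hzn]
    have : ∏ i ∈ n.divisors, f i = ∏ i ∈ n.divisors, (cyclotomic i ℂ).eval z := by
      refine Finset.prod_congr rfl fun i hi => ?_
      have : z ^ i ≠ 1 := pow_ne_one_of_dvd hzm (dvd_trans (Nat.dvd_of_mem_divisors hi) hnm)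
      simp only [hf, if_neg this]
    rw [this, ← Polynomial.eval_prod, prod_cyclotomic_eq_X_pow_sub_one hn ℂ]
    simp

lemma abs_cyclotomic_mul_eq (hm : m ≠ 0) (hzm : z ^ m ≠ 1) :
    ‖(cyclotomic m ℂ).eval z‖
      * (∏ d ∈ m.divisors.filter fun d => μ d = -1, ‖z ^ (m/d) - 1‖)
      = ∏ d ∈ m.divisors.filter fun d => μ d = 1, ‖z ^ (m/d) - 1‖ := by
  have h := moebius_prod_eq hm hzm
  have habs : ‖(cyclotomic m ℂ).eval z‖
      = ∏ d ∈ m.divisors, ‖z ^ (m/d) - 1‖ ^ (μ d) := by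
    rw [← h, Complex.norm_prod]
    rw [← Nat.prod_divisorsAntidiagonal (fun d e => ‖z ^ e - 1‖ ^ (μ d))]
    refine Finset.prod_congr rfl fun x hx => ?_
    exact norm_zpow _ _
  have hW : ∀ d ∈ m.divisors, ‖z ^ (m/d) - 1‖ ≠ 0 := by
    intro d hd
    refine norm_ne_zero_iff.mpr (sub_ne_zero.mpr ?_)
    exact pow_ne_one_of_dvd hzm (Nat.div_dvd_of_dvd (Nat.dvd_of_mem_divisors hd))
  rw [habs]
  rw [← Finset.prod_filter_mul_prod_filter_not m.divisors (fun d => μ d = 1)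
      (fun d => ‖z ^ (m/d) - 1‖ ^ (μ d))]
  have h1 : ∏ d ∈ m.divisors.filter (fun d => μ d = 1),
      ‖z ^ (m/d) - 1‖ ^ (μ d)
      = ∏ d ∈ m.divisors.filter (fun d => μ d = 1), ‖z ^ (m/d) - 1‖ := by
    refine Finset.prod_congr rfl fun d hd => ?_
    rw [(Finset.mem_filter.mp hd).2]
    simp
  have hsub : (m.divisors.filter fun d => ¬ μ d = 1).filter (fun d => μ d = -1)
      = m.divisors.filter (fun d => μ d = -1) := by
    ext d
    simp only [Finset.mem_filter]
    constructor
    · rintro ⟨⟨hs, _⟩, h2⟩; exact ⟨hs, h2⟩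
    · rintro ⟨hs, h2⟩; refine ⟨⟨hs, ?_⟩, h2⟩; rw [h2]; decide
  have h2 : ∏ d ∈ m.divisors.filter (fun d => ¬ μ d = 1),
      ‖z ^ (m/d) - 1‖ ^ (μ d)
      = (∏ d ∈ m.divisors.filter (fun d => μ d = -1), ‖z ^ (m/d) - 1‖)⁻¹ := by
    rw [← Finset.prod_filter_mul_prod_filter_not (m.divisors.filter fun d => ¬ μ d = 1)
      (fun d => μ d = -1) (fun d => ‖z ^ (m/d) - 1‖ ^ (μ d)), hsub]
    have ha : ∏ d ∈ m.divisors.filter (fun d => μ d = -1),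
        ‖z ^ (m/d) - 1‖ ^ (μ d)
        = (∏ d ∈ m.divisors.filter (fun d => μ d = -1), ‖z ^ (m/d) - 1‖)⁻¹ := by
      rw [← Finset.prod_inv_distrib]
      refine Finset.prod_congr rfl fun d hd => ?_
      rw [(Finset.mem_filter.mp hd).2]
      simp [zpow_neg]
    have hb : ∏ d ∈ ((m.divisors.filter fun d => ¬ μ d = 1).filter fun d => ¬ μ d = -1),
        ‖z ^ (m/d) - 1‖ ^ (μ d) = 1 := by
      refine Finset.prod_eq_one fun d hd => ?_
      simp only [Finset.mem_filter] at hd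
      have h0 : μ d = 0 := by
        by_contra hc
        rcases moebius_ne_zero_iff_eq_or.mp hc with hc | hc
        · exact hd.1.2 hc
        · exact hd.2 hc
      rw [h0]
      simp
    rw [ha, hb, mul_one]
  rw [h1, h2]
  have hNpos : (0:ℝ) < ∏ d ∈ m.divisors.filter (fun d => μ d = -1),
      ‖z ^ (m/d) - 1‖ := by
    refine Finset.prod_pos fun d hd => ?_
    have := hW d (Finset.mem_filter.mp hd).1
    positivity
  field_simp

end CycloAux4


namespace CycloMain
open CycloAux CycloAux2 CycloAux5 CycloAux3 CycloAux4

set_option maxHeartbeats 2000000 in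
theorem main_ge3 {m : ℕ} (hm3 : 3 ≤ m) {z : ℂ} (hz : ‖z‖ ≤ 1)
    (hzm : z ^ m ≠ 1) :
    ‖(Polynomial.cyclotomic m ℂ).eval z‖
      ≤ (π * m) ^ (2 ^ m.primeFactors.card) := by
  have hm0 : m ≠ 0 := by omega
  have hm1 : m ≠ 1 := by omega
  have hmR : (3:ℝ) ≤ (m:ℝ) := by exact_mod_cast hm3
  have hπ3 : (3:ℝ) < π := Real.pi_gt_three
  have hπ0 : (π:ℝ) ≠ 0 := Real.pi_ne_zero
  have hπm1 : (1:ℝ) ≤ π * m := by nlinarith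
  have hρ0 : (0:ℝ) ≤ ‖z‖ := norm_nonneg z
  have hρ1 : (0:ℝ) ≤ 1 - ‖z‖ := by linarith
  set ν : ℝ := z.arg / (2*π) with hν
  have hargeq : ∀ a : ℕ, (a:ℝ) * z.arg / 2 = π * ((a:ℝ)*ν) := by
    intro a; rw [hν]; field_simp
  -- trivial upper bound
  have hWle2 : ∀ a : ℕ, ‖z ^ a - 1‖ ≤ 2 := by
    intro a
    have h := norm_add_le (z ^ a) (-1)
    rw [← sub_eq_add_neg] at h
    have h2 : ‖(-1 : ℂ)‖ = 1 := by simp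
    have h3 : ‖z ^ a‖ ≤ 1 := by
      rw [norm_pow]; exact pow_le_one₀ hρ0 hz
    linarith
  -- u bounds
  have hu0 : ∀ a : ℕ, (0:ℝ) ≤ 1 - ‖z‖ ^ a := by
    intro a
    have := pow_le_one₀ hρ0 hz (n := a); linarith
  have huup : ∀ a : ℕ, a ≤ m → 1 - ‖z‖ ^ a ≤ (m:ℝ) * (1 - ‖z‖) := by
    intro a ham
    have h1 := u_le hz hρ0 a
    have h2 : (a:ℝ) ≤ (m:ℝ) := by exact_mod_cast ham
    nlinarith
  have humono : ∀ a : ℕ, a ≠ 0 → 1 - ‖z‖ ≤ 1 - ‖z‖ ^ a := by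
    intro a ha
    exact u_mono hρ0 hz (Nat.one_le_iff_ne_zero.mpr ha)
  -- lower bound from h-distance
  have hWlow : ∀ a : ℕ,
      1/(2*(m:ℝ)) ≤ |(a:ℝ)*ν - round ((a:ℝ)*ν)| →
      1/(2*(m:ℝ)) ≤ ‖z ^ a - 1‖ := by
    intro a hlow
    have hb := (W_bounds hz a).2
    rw [hargeq a] at hb
    have hvb := (v_bounds ((a:ℝ)*ν)).1
    have := hu0 a
    linarith
  -- divisor helpers
  have hdvd : ∀ d ∈ m.divisors, (m/d) ∣ m ∧ m/d ≠ 0 ∧ m/d ≤ m := by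
    intro d hd
    have h1 : d ∣ m := Nat.dvd_of_mem_divisors hd
    refine ⟨Nat.div_dvd_of_dvd h1, ?_, Nat.div_le_self m d⟩
    have : 0 < m / d := Nat.div_pos (Nat.le_of_dvd (Nat.pos_of_ne_zero hm0) h1)
      (Nat.pos_of_mem_divisors hd)
    omega
  have hWpos : ∀ d ∈ m.divisors, 0 < ‖z ^ (m/d) - 1‖ := by
    intro d hd
    have hne := pow_ne_one_of_dvd hzm (hdvd d hd).1
    exact norm_pos_iff.mpr (sub_ne_zero.mpr hne)
  set P := m.divisors.filter (fun d => μ d = 1) with hP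
  set N := m.divisors.filter (fun d => μ d = -1) with hN
  have hPsub : ∀ d ∈ P, d ∈ m.divisors := fun d hd => (Finset.mem_filter.mp hd).1
  have hNsub : ∀ d ∈ N, d ∈ m.divisors := fun d hd => (Finset.mem_filter.mp hd).1
  have habs := abs_cyclotomic_mul_eq hm0 hzm
  have hNprodpos : 0 < ∏ d ∈ N, ‖z ^ (m/d) - 1‖ :=
    Finset.prod_pos (fun d hd => hWpos d (hNsub d hd))
  have hcard : P.card = N.card := card_eq_of_ne_one hm1
  have hcard2 : P.card + N.card ≤ 2 ^ m.primeFactors.card := card_sq_le m hm0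
  have hXpow : ((π*(m:ℝ))^2)^(N.card) ≤ (π*m) ^ (2 ^ m.primeFactors.card) := by
    rw [← pow_mul]
    apply pow_le_pow_right₀ hπm1
    omega
  suffices hs : ∏ d ∈ P, ‖z ^ (m/d) - 1‖
      ≤ ((π*(m:ℝ))^2)^(N.card) * ∏ d ∈ N, ‖z ^ (m/d) - 1‖ by
    have h1 : ‖(Polynomial.cyclotomic m ℂ).eval z‖ ≤ ((π*(m:ℝ))^2)^(N.card) := by
      apply le_of_mul_le_mul_right _ hNprodpos
      rw [habs]
      exact hs
    exact h1.trans hXpow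
  -- shared bounded-case assembly
  have hbounded : (∀ d ∈ N, 1/(2*(m:ℝ)) ≤ ‖z ^ (m/d) - 1‖) →
      ∏ d ∈ P, ‖z ^ (m/d) - 1‖
        ≤ ((π*(m:ℝ))^2)^(N.card) * ∏ d ∈ N, ‖z ^ (m/d) - 1‖ := by
    intro hAll
    have hPle : ∏ d ∈ P, ‖z ^ (m/d) - 1‖ ≤ 2 ^ P.card := by
      calc ∏ d ∈ P, ‖z ^ (m/d) - 1‖ ≤ ∏ _d ∈ P, (2:ℝ) :=
            Finset.prod_le_prod (fun d hd => (hWpos d (hPsub d hd)).le)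
              (fun d _ => hWle2 _)
        _ = 2 ^ P.card := Finset.prod_const 2
    have hNge : (1/(2*(m:ℝ))) ^ N.card ≤ ∏ d ∈ N, ‖z ^ (m/d) - 1‖ := by
      calc (1/(2*(m:ℝ))) ^ N.card = ∏ _d ∈ N, (1/(2*(m:ℝ))) := (Finset.prod_const _).symm
        _ ≤ ∏ d ∈ N, ‖z ^ (m/d) - 1‖ :=
            Finset.prod_le_prod (fun _ _ => by positivity) hAll
    have h4m : (2:ℝ) ≤ (π*(m:ℝ))^2 * (1/(2*m)) := by
      have hm2 : (0:ℝ) < (m:ℝ) := by linarith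
      have heq : (π*(m:ℝ))^2 * (1/(2*m)) = π^2*m/2 := by field_simp
      rw [heq]; nlinarith
    have hstep : (2:ℝ) ^ P.card ≤ ((π*(m:ℝ))^2 * (1/(2*m))) ^ N.card := by
      rw [hcard]
      exact pow_le_pow_left₀ (by norm_num) h4m _
    calc ∏ d ∈ P, ‖z ^ (m/d) - 1‖ ≤ 2 ^ P.card := hPle
      _ ≤ ((π*(m:ℝ))^2 * (1/(2*m))) ^ N.card := hstep
      _ = ((π*(m:ℝ))^2)^(N.card) * (1/(2*(m:ℝ))) ^ N.card := mul_pow _ _ _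
      _ ≤ ((π*(m:ℝ))^2)^(N.card) * ∏ d ∈ N, ‖z ^ (m/d) - 1‖ := by
          apply mul_le_mul_of_nonneg_left hNge (by positivity)
  by_cases hA : ∀ d ∈ N, 1/(2*(m:ℝ)) ≤ |((m/d : ℕ):ℝ)*ν - round (((m/d : ℕ):ℝ)*ν)|
  · exact hbounded (fun d hd => hWlow _ (hA d hd))
  push_neg at hA
  obtain ⟨d0, hd0N, hsmall⟩ := hA
  have hd0div := hdvd d0 (hNsub d0 hd0N)
  obtain ⟨q, Δ, hq0, hqa0, hΔ0, hΔle, hclass, hdich⟩ :=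
    class_setup ν m (m/d0) hd0div.2.1 hd0div.2.2 hsmall
  have hqm : q ∣ m := hqa0.trans hd0div.1
  by_cases hq1 : m / q = 1
  · -- q = m : every d in N is out of the class
    apply hbounded
    intro d hd
    have hdN := Finset.mem_filter.mp hd
    have hda := hdvd d hdN.1
    have hqem : q = m := by
      have h := Nat.div_mul_cancel hqm
      rw [hq1, one_mul] at h
      exact h
    have hnq : ¬ q ∣ m/d := by
      intro hcon
      rw [hqem] at hcon
      have heq : m/d = m := Nat.dvd_antisymm hda.1 hcon
      have hd1 : d = 1 := by
        rcases Nat.div_eq_self.mp heq with h | h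
        · exact absurd h hm0
        · exact h
      rw [hd1] at hdN
      have h2 := hdN.2
      rw [moebius_apply_one] at h2
      exact absurd h2 (by decide)
    exact hWlow _ (hdich _ hda.2.1 hda.2.2 hnq)
  · -- main class case
    have hmq0 : m / q ≠ 0 := by
      have : 0 < m/q := Nat.div_pos (Nat.le_of_dvd (Nat.pos_of_ne_zero hm0) hqm)
        (Nat.pos_of_ne_zero hq0)
      omega
    have hmqdvd : m / q ∣ m := Nat.div_dvd_of_dvd hqm
    have hdd : ∀ d, d ∣ m → (d ∣ m/q ↔ q ∣ m/d) := by
      intro d hdm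
      rw [Nat.dvd_div_iff_mul_dvd hdm, Nat.dvd_div_iff_mul_dvd hqm]
      constructor
      · intro h; rwa [Nat.mul_comm]
      · intro h; rwa [Nat.mul_comm]
    have hPC : P.filter (fun d => d ∣ m/q) = (m/q).divisors.filter (fun d => μ d = 1) := by
      ext e
      simp only [hP, Finset.mem_filter, Nat.mem_divisors]
      constructor
      · rintro ⟨⟨⟨h1, h2⟩, h3⟩, h4⟩; exact ⟨⟨h4, hmq0⟩, h3⟩
      · rintro ⟨⟨h1, _⟩, h3⟩; exact ⟨⟨⟨h1.trans hmqdvd, hm0⟩, h3⟩, h1⟩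
    have hNC : N.filter (fun d => d ∣ m/q) = (m/q).divisors.filter (fun d => μ d = -1) := by
      ext e
      simp only [hN, Finset.mem_filter, Nat.mem_divisors]
      constructor
      · rintro ⟨⟨⟨h1, h2⟩, h3⟩, h4⟩; exact ⟨⟨h4, hmq0⟩, h3⟩
      · rintro ⟨⟨h1, _⟩, h3⟩; exact ⟨⟨⟨h1.trans hmqdvd, hm0⟩, h3⟩, h1⟩
    have hkeq : (P.filter (fun d => d ∣ m/q)).card = (N.filter (fun d => d ∣ m/q)).card := by
      rw [hPC, hNC]
      exact card_eq_of_ne_one hq1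
    -- constants
    set ρ : ℝ := ‖z‖ with hρdef
    set Ub : ℝ := (m:ℝ)*(1 - ρ) + 2*(π*((m:ℝ)*Δ)) with hUbdef
    set Lb : ℝ := ((1 - ρ) + 2*(2*Δ))/4 with hLbdef
    have hLb0 : 0 ≤ Lb := by rw [hLbdef]; positivity
    have hUb0 : 0 ≤ Ub := by
      rw [hUbdef]
      have : (0:ℝ) ≤ (m:ℝ)*(1-ρ) := by positivity
      have : (0:ℝ) ≤ 2*(π*((m:ℝ)*Δ)) := by positivity
      linarith
    have hUbLb : Ub ≤ (π*(m:ℝ))^2 * Lb := by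
      have key : (π*(m:ℝ))^2 * Lb - Ub
          = (1-ρ)*((π*(m:ℝ))^2/4 - m) + Δ*((π*(m:ℝ))^2 - 2*π*m) := by
        rw [hUbdef, hLbdef]; ring
      have t1 : (0:ℝ) ≤ (π*(m:ℝ))^2/4 - m := by nlinarith
      have t2 : (0:ℝ) ≤ (π*(m:ℝ))^2 - 2*π*m := by nlinarith
      nlinarith [mul_nonneg hρ1 t1, mul_nonneg hΔ0 t2]
    have h2C : (2:ℝ) ≤ (π*(m:ℝ))^2 * (1/(2*m)) := by
      have hm2 : (0:ℝ) < (m:ℝ) := by linarith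
      have heq : (π*(m:ℝ))^2 * (1/(2*m)) = π^2*m/2 := by field_simp
      rw [heq]; nlinarith
    -- per-element bounds
    have hPCb : ∀ d ∈ P.filter (fun d => d ∣ m/q), ‖z ^ (m/d) - 1‖ ≤ Ub := by
      intro d hd
      have hdP := Finset.mem_filter.mp hd
      have hda := hdvd d (hPsub d hdP.1)
      have hqa : q ∣ m/d := (hdd d (Nat.dvd_of_mem_divisors (hPsub d hdP.1))).mp hdP.2
      have hcl := (hclass (m/d) hda.2.1 hda.2.2 hqa).1
      have hb := (W_bounds hz (m/d)).1
      rw [hargeq (m/d)] at hb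
      have huu := huup (m/d) hda.2.2
      rw [hUbdef]
      have : 2*|Real.sin (π*(((m/d : ℕ):ℝ)*ν))| ≤ 2*(π*((m:ℝ)*Δ)) := by linarith
      calc ‖z ^ (m/d) - 1‖
          ≤ (1 - ‖z‖ ^ (m/d)) + 2*|Real.sin (π*(((m/d:ℕ):ℝ)*ν))| := hb
        _ ≤ (m:ℝ)*(1 - ρ) + 2*(π*((m:ℝ)*Δ)) := by rw [hρdef] at *; linarith
    have hNCb : ∀ d ∈ N.filter (fun d => d ∣ m/q), Lb ≤ ‖z ^ (m/d) - 1‖ := by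
      intro d hd
      have hdN := Finset.mem_filter.mp hd
      have hda := hdvd d (hNsub d hdN.1)
      have hqa : q ∣ m/d := (hdd d (Nat.dvd_of_mem_divisors (hNsub d hdN.1))).mp hdN.2
      have hcl := (hclass (m/d) hda.2.1 hda.2.2 hqa).2
      have hb := (W_bounds hz (m/d)).2
      rw [hargeq (m/d)] at hb
      have hum := humono (m/d) hda.2.1
      rw [hLbdef, hρdef]
      have : 2*(2*Δ) ≤ 2*|Real.sin (π*(((m/d:ℕ):ℝ)*ν))| := by linarith
      linarith
    have hNOb : ∀ d ∈ N.filter (fun d => ¬ d ∣ m/q),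
        1/(2*(m:ℝ)) ≤ ‖z ^ (m/d) - 1‖ := by
      intro d hd
      have hdN := Finset.mem_filter.mp hd
      have hda := hdvd d (hNsub d hdN.1)
      have hnq : ¬ q ∣ m/d := fun hcon =>
        hdN.2 ((hdd d (Nat.dvd_of_mem_divisors (hNsub d hdN.1))).mpr hcon)
      exact hWlow _ (hdich _ hda.2.1 hda.2.2 hnq)
    -- products
    have hsplitP := Finset.prod_filter_mul_prod_filter_not P (fun d => d ∣ m/q)
      (fun d => ‖z ^ (m/d) - 1‖)
    have hsplitN := Finset.prod_filter_mul_prod_filter_not N (fun d => d ∣ m/q)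
      (fun d => ‖z ^ (m/d) - 1‖)
    set k : ℕ := (P.filter (fun d => d ∣ m/q)).card with hk
    set pO : ℕ := (P.filter (fun d => ¬ d ∣ m/q)).card with hpO
    set nO : ℕ := (N.filter (fun d => ¬ d ∣ m/q)).card with hnO
    have hcards1 : k + pO = P.card := by
      rw [hk, hpO]
      exact Finset.card_filter_add_card_filter_not _
    have hcards2 : k + nO = N.card := by
      rw [hkeq, hnO]
      exact Finset.card_filter_add_card_filter_not _
    have hpOnO : pO = nO := by omega
    have h1 : ∏ d ∈ P.filter (fun d => d ∣ m/q), ‖z ^ (m/d) - 1‖ ≤ Ub ^ k := by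
      calc (∏ d ∈ P.filter (fun d => d ∣ m/q), ‖z ^ (m/d) - 1‖)
          ≤ ∏ _d ∈ P.filter (fun d => d ∣ m/q), Ub :=
            Finset.prod_le_prod (fun d hd => (hWpos d (hPsub d (Finset.mem_filter.mp hd).1)).le) hPCb
        _ = Ub ^ k := Finset.prod_const Ub
    have h2 : ∏ d ∈ P.filter (fun d => ¬ d ∣ m/q), ‖z ^ (m/d) - 1‖ ≤ 2 ^ pO := by
      calc (∏ d ∈ P.filter (fun d => ¬ d ∣ m/q), ‖z ^ (m/d) - 1‖)
          ≤ ∏ _d ∈ P.filter (fun d => ¬ d ∣ m/q), (2:ℝ) :=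
            Finset.prod_le_prod (fun d hd => (hWpos d (hPsub d (Finset.mem_filter.mp hd).1)).le)
              (fun d _ => hWle2 _)
        _ = 2 ^ pO := Finset.prod_const 2
    have h3 : Lb ^ k ≤ ∏ d ∈ N.filter (fun d => d ∣ m/q), ‖z ^ (m/d) - 1‖ := by
      rw [hkeq]
      calc Lb ^ (N.filter (fun d => d ∣ m/q)).card
          = ∏ _d ∈ N.filter (fun d => d ∣ m/q), Lb := (Finset.prod_const Lb).symm
        _ ≤ _ := Finset.prod_le_prod (fun _ _ => hLb0) hNCb
    have h4 : (1/(2*(m:ℝ))) ^ nO ≤ ∏ d ∈ N.filter (fun d => ¬ d ∣ m/q),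
        ‖z ^ (m/d) - 1‖ := by
      calc (1/(2*(m:ℝ))) ^ nO = ∏ _d ∈ N.filter (fun d => ¬ d ∣ m/q), (1/(2*(m:ℝ))) :=
            (Finset.prod_const _).symm
        _ ≤ _ := Finset.prod_le_prod (fun _ _ => by positivity) hNOb
    have hprodPC0 : (0:ℝ) ≤ ∏ d ∈ P.filter (fun d => ¬ d ∣ m/q), ‖z ^ (m/d) - 1‖ :=
      Finset.prod_nonneg (fun d hd => (hWpos d (hPsub d (Finset.mem_filter.mp hd).1)).le)
    have hNC0 : (0:ℝ) ≤ ∏ d ∈ N.filter (fun d => d ∣ m/q), ‖z ^ (m/d) - 1‖ :=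
      Finset.prod_nonneg (fun d hd => (hWpos d (hNsub d (Finset.mem_filter.mp hd).1)).le)
    calc ∏ d ∈ P, ‖z ^ (m/d) - 1‖
        = (∏ d ∈ P.filter (fun d => d ∣ m/q), ‖z ^ (m/d) - 1‖)
          * ∏ d ∈ P.filter (fun d => ¬ d ∣ m/q), ‖z ^ (m/d) - 1‖ := hsplitP.symm
      _ ≤ Ub ^ k * 2 ^ pO := by
          apply mul_le_mul h1 h2 hprodPC0 (by positivity)
      _ ≤ ((π*(m:ℝ))^2 * Lb) ^ k * ((π*(m:ℝ))^2 * (1/(2*(m:ℝ)))) ^ pO := by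
          apply mul_le_mul (pow_le_pow_left₀ hUb0 hUbLb k)
            (pow_le_pow_left₀ (by norm_num) h2C pO) (by positivity) (by positivity)
      _ = ((π*(m:ℝ))^2) ^ (k + pO) * (Lb ^ k * (1/(2*(m:ℝ))) ^ pO) := by
          rw [mul_pow, mul_pow, pow_add]; ring
      _ = ((π*(m:ℝ))^2) ^ (N.card) * (Lb ^ k * (1/(2*(m:ℝ))) ^ nO) := by
          rw [hpOnO, show k + nO = N.card from by omega]
      _ ≤ ((π*(m:ℝ))^2) ^ (N.card) * ((∏ d ∈ N.filter (fun d => d ∣ m/q),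
            ‖z ^ (m/d) - 1‖)
            * ∏ d ∈ N.filter (fun d => ¬ d ∣ m/q), ‖z ^ (m/d) - 1‖) := by
          apply mul_le_mul_of_nonneg_left _ (by positivity)
          apply mul_le_mul h3 h4 (by positivity) hNC0
      _ = ((π*(m:ℝ))^2) ^ (N.card) * ∏ d ∈ N, ‖z ^ (m/d) - 1‖ := by
          rw [hsplitN]

end CycloMain

namespace CycloMain
open CycloAux CycloAux2 CycloAux5 CycloAux3 CycloAux4

lemma abs_sub_one_le {z : ℂ} (hz : ‖z‖ ≤ 1) (w : ℂ) (hw : ‖w‖ = 1) :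
    ‖z - w‖ ≤ 2 := by
  have h := norm_add_le z (-w)
  rw [← sub_eq_add_neg] at h
  rw [norm_neg, hw] at h
  linarith

theorem cyclotomic_abs_le' (m : ℕ) (hm : 0 < m) (z : ℂ) (hz : ‖z‖ ≤ 1) :
    ‖(Polynomial.cyclotomic m ℂ).eval z‖ ≤
      (Real.pi * m) ^ (2 ^ m.primeFactors.card) := by
  have hπ3 : (3:ℝ) < π := Real.pi_gt_three
  rcases Nat.lt_or_ge m 3 with hlt | hge
  · interval_cases m
    · -- m = 1
      rw [Polynomial.cyclotomic_one]
      simp only [Polynomial.eval_sub, Polynomial.eval_X, Polynomial.eval_one,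
        Nat.primeFactors_one, Finset.card_empty, pow_zero, pow_one, Nat.cast_one, mul_one]
      have := abs_sub_one_le hz 1 (by simp)
      linarith
    · -- m = 2
      rw [Polynomial.cyclotomic_two]
      simp only [Polynomial.eval_add, Polynomial.eval_X, Polynomial.eval_one, Nat.cast_ofNat]
      have hcard : (Nat.primeFactors 2).card = 1 := by
        rw [Nat.Prime.primeFactors Nat.prime_two]
        simp
      rw [hcard]
      have h1 : ‖z + 1‖ ≤ 2 := by
        have := abs_sub_one_le hz (-1) (by simp)
        simpa using this
      have h2 : ((2:ℝ))^(2^1) ≤ (π * 2) ^ (2^1) := by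
        apply pow_le_pow_left₀ (by norm_num)
        nlinarith
      calc ‖z + 1‖ ≤ 2 := h1
        _ ≤ (π * 2) ^ 2 ^ 1 := by
            have : ((2:ℝ))^(2^1) = 4 := by norm_num
            nlinarith
  · by_cases hzm : z ^ m = 1
    · -- limit argument
      have hB0 : (0:ℝ) < π * m := by
        have : (3:ℝ) ≤ (m:ℝ) := by exact_mod_cast hge
        nlinarith
      have key : ∀ t : ℝ, 0 ≤ t → t < 1 →
          ‖(Polynomial.cyclotomic m ℂ).eval ((t:ℂ)*z)‖
            ≤ (π * m) ^ (2 ^ m.primeFactors.card) := by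
        intro t ht0 ht1
        have habs : ‖(t:ℂ)*z‖ ≤ t := by
          rw [norm_mul, Complex.norm_of_nonneg ht0]
          nlinarith [norm_nonneg z]
        have hlt : ‖(t:ℂ)*z‖ < 1 := lt_of_le_of_lt habs ht1
        apply main_ge3 hge (le_of_lt hlt)
        intro hcon
        have : ‖((t:ℂ)*z) ^ m‖ = 1 := by rw [hcon, norm_one]
        rw [norm_pow] at this
        have hlt2 : ‖(t:ℂ)*z‖ ^ m < 1 :=
          pow_lt_one₀ (norm_nonneg _) hlt (by omega)
        linarith
      have hcont : Continuous fun t : ℝ =>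
          ‖(Polynomial.cyclotomic m ℂ).eval ((t:ℂ)*z)‖ := by
        apply continuous_norm.comp
        exact (Polynomial.continuous _).comp (Complex.continuous_ofReal.mul continuous_const)
      have htend : Filter.Tendsto (fun t : ℝ =>
          ‖(Polynomial.cyclotomic m ℂ).eval ((t:ℂ)*z)‖) (nhdsWithin (1:ℝ) (Set.Iio (1:ℝ)))
          (nhds (‖(Polynomial.cyclotomic m ℂ).eval (((1:ℝ):ℂ)*z)‖)) :=
        (hcont.tendsto 1).mono_left nhdsWithin_le_nhds
      have hev : ∀ᶠ (t:ℝ) in nhdsWithin (1:ℝ) (Set.Iio (1:ℝ)),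
          ‖(Polynomial.cyclotomic m ℂ).eval ((t:ℂ)*z)‖
            ≤ (π * m) ^ (2 ^ m.primeFactors.card) := by
        filter_upwards [Ioo_mem_nhdsLT_of_mem
          (show (1:ℝ) ∈ Set.Ioc (0:ℝ) 1 by constructor <;> norm_num)] with t ht
        exact key t ht.1.le ht.2
      have := le_of_tendsto htend hev
      simpa using this
    · exact main_ge3 hge hz hzm

end CycloMain

/-- For every positive integer `m` and every complex `z` with `|z| ≤ 1`, the `m`-th
cyclotomic polynomial satisfies `|Φ_m(z)| ≤ (π m) ^ (2 ^ ω(m))`, i.e.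
`log |Φ_m(z)| ≤ 2 ^ ω(m) · log (π m)` (with the convention `log 0 = -∞`). -/
theorem cyclotomic_abs_le (m : ℕ) (hm : 0 < m) (z : ℂ) (hz : ‖z‖ ≤ 1) :
    ‖(Polynomial.cyclotomic m ℂ).eval z‖ ≤
      (Real.pi * m) ^ (2 ^ m.primeFactors.card) :=
  CycloMain.cyclotomic_abs_le' m hm z hz
end

section
/- For every positive integer m, every real ε with 0 < ε ≤ 1/2, and every complex number z with |z| ≤ 1 - ε, one has log|Φ_m(z)| ≥ -2^{ω(m)} · log(1/ε). -/
open Polynomial Finset ArithmeticFunction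
open scoped ArithmeticFunction
open scoped ArithmeticFunction.Moebius

/-- For every positive integer `m`, every `0 < ε ≤ 1/2`, and every complex `z` with
`|z| ≤ 1 - ε`, one has `log |Φ_m(z)| ≥ -2 ^ ω(m) · log (1/ε)`. -/
theorem cyclotomic_log_abs_lower (m : ℕ) (hm : 0 < m) (ε : ℝ) (hε : 0 < ε)
    (hε' : ε ≤ 1 / 2) (z : ℂ) (hz : ‖z‖ ≤ 1 - ε) :
    -(2 ^ m.primeFactors.card : ℝ) * Real.log (1 / ε) ≤
      Real.log ‖(Polynomial.cyclotomic m ℂ).eval z‖ := by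
  have hε1 : ε < 1 := lt_of_le_of_lt hε' (by norm_num)
  have habs1 : ‖z‖ < 1 := lt_of_le_of_lt hz (by linarith)
  have habsnn : (0:ℝ) ≤ ‖z‖ := norm_nonneg z
  -- basic bounds on |z^k - 1| for k > 0
  have hpow : ∀ k : ℕ, 0 < k → ‖z ^ k‖ ≤ 1 - ε := by
    intro k hk
    rw [norm_pow]
    calc ‖z‖ ^ k ≤ (1 - ε) ^ k := pow_le_pow_left₀ habsnn hz k
      _ ≤ 1 - ε := pow_le_of_le_one (by linarith) (by linarith) hk.ne'
  have hlow : ∀ k : ℕ, 0 < k → ε ≤ ‖z ^ k - 1‖ := by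
    intro k hk
    have h1 := norm_sub_norm_le (1:ℂ) (z ^ k)
    rw [norm_sub_rev] at h1
    simp only [norm_one] at h1
    linarith [hpow k hk]
  have hup : ∀ k : ℕ, ‖z ^ k - 1‖ ≤ 2 := by
    intro k
    have h1 := norm_sub_le (z ^ k) (1:ℂ)
    simp only [norm_one] at h1
    have h2 : ‖z ^ k‖ ≤ 1 := by
      rw [norm_pow]; exact pow_le_one₀ habsnn habs1.le
    linarith
  -- the Möbius inversion identity for values of log |Φ|
  have key : ∀ n > 0, ∑ d ∈ n.divisors,
      Real.log (‖(cyclotomic d ℂ).eval z‖) =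
      Real.log (‖z ^ n - 1‖) := by
    intro n hn
    have hprod : ∏ d ∈ n.divisors, ‖(cyclotomic d ℂ).eval z‖ =
        ‖z ^ n - 1‖ := by
      rw [← norm_prod, ← eval_prod, prod_cyclotomic_eq_X_pow_sub_one hn ℂ]
      simp
    have hne : ‖z ^ n - 1‖ ≠ 0 := by
      have := hlow n hn; linarith
    have hne' : ∀ d ∈ n.divisors, ‖(cyclotomic d ℂ).eval z‖ ≠ 0 := by
      intro d hd
      exact Finset.prod_ne_zero_iff.mp (hprod ▸ hne) d hd
    rw [← hprod, Real.log_prod hne']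
  have inv := (sum_eq_iff_sum_mul_moebius_eq
    (f := fun d => Real.log (‖(cyclotomic d ℂ).eval z‖))
    (g := fun n => Real.log (‖z ^ n - 1‖))).mp key m hm
  rw [← inv]
  -- per-term lower bound
  have hlogε : Real.log ε ≤ 0 := Real.log_nonpos hε.le hε1.le
  have hterm : ∀ x ∈ m.divisorsAntidiagonal,
      (if Squarefree x.1 then Real.log ε else 0) ≤
        (μ x.1 : ℝ) * Real.log (‖z ^ x.2 - 1‖) := by
    intro x hx
    have hx2 : 0 < x.2 := Nat.pos_of_mem_divisors (Nat.snd_mem_divisors_of_mem_antidiagonal hx)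
    have hl := Real.log_le_log hε (hlow x.2 hx2)
    have hu : Real.log (‖z ^ x.2 - 1‖) ≤ Real.log 2 :=
      Real.log_le_log (lt_of_lt_of_le hε (hlow x.2 hx2)) (hup x.2)
    have hε2 : Real.log ε ≤ -Real.log 2 := by
      have := Real.log_le_log hε hε'
      rwa [one_div, Real.log_inv] at this
    by_cases hsq : Squarefree x.1
    · rw [if_pos hsq]
      rcases moebius_ne_zero_iff_eq_or.mp (moebius_ne_zero_iff_squarefree.mpr hsq) with h | h
      · rw [h]; push_cast; linarith
      · rw [h]; push_cast; nlinarith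
    · rw [if_neg hsq, moebius_eq_zero_of_not_squarefree hsq]
      push_cast; simp
  have hsum := Finset.sum_le_sum hterm
  refine le_trans ?_ hsum
  rw [← Finset.sum_filter, Finset.sum_const, nsmul_eq_mul]
  have hcard : (m.divisorsAntidiagonal.filter fun x => Squarefree x.1).card ≤
      2 ^ m.primeFactors.card := by
    rw [← Finset.card_powerset]
    apply Finset.card_le_card_of_injOn (fun x => x.1.primeFactors)
    · intro x hx
      rw [Finset.mem_coe, Finset.mem_filter, Nat.mem_divisorsAntidiagonal] at hx
      rw [Finset.mem_coe, Finset.mem_powerset]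
      exact Nat.primeFactors_mono ⟨x.2, hx.1.1.symm⟩ hx.1.2
    · intro x hx y hy hxy
      rw [Finset.mem_coe, Finset.mem_filter, Nat.mem_divisorsAntidiagonal] at hx hy
      have h1 : x.1 = y.1 := by
        simp only at hxy
        rw [← Nat.prod_primeFactors_of_squarefree hx.2, ← Nat.prod_primeFactors_of_squarefree hy.2,
          hxy]
      have hx1 : x.1 ≠ 0 := hx.2.ne_zero
      have h2 : x.2 = y.2 := by
        have := hx.1.1.trans hy.1.1.symm
        rw [h1] at this
        exact Nat.eq_of_mul_eq_mul_left (Nat.pos_of_ne_zero (h1 ▸ hx1)) this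
      exact Prod.ext h1 h2
  rw [one_div, Real.log_inv]
  have hcard' : ((m.divisorsAntidiagonal.filter fun x => Squarefree x.1).card : ℝ) ≤
      2 ^ m.primeFactors.card := by exact_mod_cast hcard
  nlinarith [hcard', hlogε]
end

section
/- For every positive integer m and every complex number z, one has |log⁺|Φ_m(z)| - φ(m)·log⁺|z|| ≤ 2^{ω(m)} · log(π m), where log⁺ t = max(log t, 0). -/
open Polynomial Finset ArithmeticFunction

noncomputable def Complex.abs : AbsoluteValue ℂ ℝ := NormedField.toAbsoluteValue ℂ

theorem Complex.norm_eq_abs (z : ℂ) : ‖z‖ = Complex.abs z := rfl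

private lemma eval_cyclo_ne_zero {n : ℕ} (hn : 0 < n) {z : ℂ} (hz : 1 < Complex.abs z) :
    (cyclotomic n ℂ).eval z ≠ 0 := by
  intro h
  obtain ⟨g, hg⟩ := cyclotomic.dvd_X_pow_sub_one n ℂ
  have h1 : z ^ n - 1 = 0 := by
    have := congrArg (Polynomial.eval z) hg
    simpa [h] using this
  have hzn : z ^ n = 1 := by rwa [sub_eq_zero] at h1
  have h2 : Complex.abs z ^ n = 1 := by rw [← map_pow, hzn, map_one]
  have h3 : 1 < Complex.abs z ^ n := one_lt_pow₀ hz hn.ne'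
  linarith

private lemma log_cyclo_eq {z : ℂ} (hz : 1 < Complex.abs z) (m : ℕ) (hm : 0 < m) :
    Real.log (Complex.abs ((cyclotomic m ℂ).eval z)) =
      ∑ x ∈ m.divisorsAntidiagonal,
        ((moebius x.1 : ℤ) : ℝ) * Real.log (Complex.abs (z ^ x.2 - 1)) := by
  have key : ∀ n, 0 < n → ∑ d ∈ n.divisors,
      Real.log (Complex.abs ((cyclotomic d ℂ).eval z))
      = Real.log (Complex.abs (z ^ n - 1)) := by
    intro n hn
    have hprod : ∏ d ∈ n.divisors, Complex.abs ((cyclotomic d ℂ).eval z)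
        = Complex.abs (z ^ n - 1) := by
      rw [← map_prod, ← Polynomial.eval_prod, prod_cyclotomic_eq_X_pow_sub_one hn,
        eval_sub, eval_pow, eval_X, eval_one]
    rw [← hprod, Real.log_prod]
    intro d hd
    exact (map_ne_zero Complex.abs).mpr
      (eval_cyclo_ne_zero (Nat.pos_of_mem_divisors hd) hz)
  have h2 := (ArithmeticFunction.sum_eq_iff_sum_smul_moebius_eq
    (f := fun k => Real.log (Complex.abs ((cyclotomic k ℂ).eval z)))
    (g := fun k => Real.log (Complex.abs (z ^ k - 1)))).mp
    (fun n hn => key n hn) m hm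
  rw [← h2]
  refine Finset.sum_congr rfl fun x hx => ?_
  rw [zsmul_eq_mul]

private lemma totient_moebius_sum (m : ℕ) (hm : 0 < m) :
    (m.totient : ℝ) = ∑ x ∈ m.divisorsAntidiagonal, ((moebius x.1 : ℤ) : ℝ) * (x.2 : ℝ) := by
  have key : ∀ n : ℕ, 0 < n → ∑ d ∈ n.divisors, ((d.totient : ℝ)) = (n : ℝ) := by
    intro n hn
    exact_mod_cast congrArg (Nat.cast : ℕ → ℝ) (Nat.sum_totient n)
  have h2 := (ArithmeticFunction.sum_eq_iff_sum_smul_moebius_eq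
    (f := fun k => ((k.totient : ℝ)))
    (g := fun k => ((k : ℝ)))).mp (fun n hn => key n hn) m hm
  rw [← h2]
  refine Finset.sum_congr rfl fun x hx => ?_
  rw [zsmul_eq_mul]

private lemma moebius_abs_sum (m : ℕ) (hm : 0 < m) :
    ∑ x ∈ m.divisorsAntidiagonal, |((moebius x.1 : ℤ) : ℝ)|
      = (2 ^ m.primeFactors.card : ℝ) := by
  rw [Nat.sum_divisorsAntidiagonal (f := fun a _ => |((moebius a : ℤ) : ℝ)|)]
  have h1 : ∀ d : ℕ, |((moebius d : ℤ) : ℝ)| = if Squarefree d then (1:ℝ) else 0 := by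
    intro d
    by_cases hd : Squarefree d
    · simp [hd, abs_moebius_eq_one_of_squarefree hd]
    · simp [hd, moebius_eq_zero_of_not_squarefree hd]
  calc ∑ d ∈ m.divisors, |((moebius d : ℤ) : ℝ)|
      = ∑ d ∈ m.divisors, (if Squarefree d then (1:ℝ) else 0) := by
        exact Finset.sum_congr rfl fun d _ => h1 d
    _ = ∑ d ∈ m.divisors with Squarefree d, (1:ℝ) := (Finset.sum_filter _ _).symm
    _ = ((UniqueFactorizationMonoid.normalizedFactors m).toFinset.powerset.card : ℝ) := by
        rw [Nat.sum_divisors_filter_squarefree hm.ne']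
        simp
    _ = (2 ^ m.primeFactors.card : ℝ) := by
        rw [Finset.card_powerset]
        rw [Nat.factors_eq]
        simp

private lemma term_bound {z : ℂ} {b : ℕ} (hb : 0 < b) (hz : 1 < Complex.abs z) :
    |Real.log (Complex.abs (z ^ b - 1)) - (b : ℝ) * Real.log (Complex.abs z)|
      ≤ max (Real.log 2) (Real.log (Complex.abs z / (Complex.abs z - 1))) := by
  set r := Complex.abs z with hr
  have hr0 : (0:ℝ) < r := by linarith
  have hr1 : (0:ℝ) < r - 1 := by linarith
  have hrb : (0:ℝ) < r ^ b := pow_pos hr0 b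
  have hrleb : r ≤ r ^ b := le_self_pow₀ (by linarith) hb.ne'
  have habs_pow : Complex.abs (z ^ b) = r ^ b := by rw [map_pow]
  rw [abs_le]
  constructor
  · have h1 : r ^ b * ((r - 1) / r) ≤ Complex.abs (z ^ b - 1) := by
      have h2 : r ^ b - 1 ≤ Complex.abs (z ^ b - 1) := by
        have := norm_sub_norm_le (z ^ b) (1 : ℂ)
        simpa [Complex.norm_eq_abs, habs_pow] using this
      have h3 : r ^ b * ((r - 1) / r) ≤ r ^ b - 1 := by
        rw [mul_div_assoc', div_le_iff₀ hr0]
        nlinarith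
      linarith
    have hpos : (0:ℝ) < r ^ b * ((r - 1) / r) := by positivity
    have h4 : Real.log (r ^ b * ((r - 1) / r)) ≤ Real.log (Complex.abs (z ^ b - 1)) :=
      Real.log_le_log hpos h1
    have h5 : Real.log (r ^ b * ((r - 1) / r))
        = (b : ℝ) * Real.log r - Real.log (r / (r - 1)) := by
      rw [Real.log_mul (ne_of_gt hrb) (by positivity), Real.log_pow,
        Real.log_div (by linarith) (ne_of_gt hr0), Real.log_div (ne_of_gt hr0) (by linarith)]
      ring
    have h6 : Real.log (r / (r-1)) ≤ max (Real.log 2) (Real.log (r / (r - 1))) :=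
      le_max_right _ _
    linarith
  · have h1 : Complex.abs (z ^ b - 1) ≤ 2 * r ^ b := by
      have h2 : Complex.abs (z ^ b - 1) ≤ r ^ b + 1 := by
        have := norm_sub_le (z ^ b) (1 : ℂ)
        simpa [Complex.norm_eq_abs, habs_pow] using this
      nlinarith
    have h4 : Real.log (Complex.abs (z ^ b - 1)) ≤ Real.log (2 * r ^ b) := by
      rcases eq_or_lt_of_le (AbsoluteValue.nonneg Complex.abs (z ^ b - 1)) with h | h
      · rw [← h, Real.log_zero]
        have : (1:ℝ) ≤ 2 * r ^ b := by nlinarith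
        exact Real.log_nonneg this
      · exact Real.log_le_log h h1
    have h5 : Real.log (2 * r ^ b) = Real.log 2 + (b : ℝ) * Real.log r := by
      rw [Real.log_mul two_ne_zero (ne_of_gt hrb), Real.log_pow]
    have h6 : Real.log 2 ≤ max (Real.log 2) (Real.log (r / (r - 1))) := le_max_left _ _
    linarith

private lemma master {m : ℕ} (hm : 0 < m) {z : ℂ} (hz : 1 < Complex.abs z) :
    |Real.log (Complex.abs ((cyclotomic m ℂ).eval z)) -
        (m.totient : ℝ) * Real.log (Complex.abs z)|
      ≤ (2 ^ m.primeFactors.card : ℝ) *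
          max (Real.log 2) (Real.log (Complex.abs z / (Complex.abs z - 1))) := by
  set r := Complex.abs z with hr
  set C := max (Real.log 2) (Real.log (r / (r - 1))) with hC
  have hC0 : 0 ≤ C := le_trans (Real.log_nonneg one_le_two) (le_max_left _ _)
  have key : Real.log (Complex.abs ((cyclotomic m ℂ).eval z)) -
      (m.totient : ℝ) * Real.log r
      = ∑ x ∈ m.divisorsAntidiagonal, ((moebius x.1 : ℤ) : ℝ) *
          (Real.log (Complex.abs (z ^ x.2 - 1)) - (x.2 : ℝ) * Real.log r) := by
    rw [log_cyclo_eq hz m hm, totient_moebius_sum m hm, Finset.sum_mul, ← Finset.sum_sub_distrib]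
    refine Finset.sum_congr rfl fun x hx => ?_
    ring
  rw [key]
  calc |∑ x ∈ m.divisorsAntidiagonal, ((moebius x.1 : ℤ) : ℝ) *
          (Real.log (Complex.abs (z ^ x.2 - 1)) - (x.2 : ℝ) * Real.log r)|
      ≤ ∑ x ∈ m.divisorsAntidiagonal, |((moebius x.1 : ℤ) : ℝ) *
          (Real.log (Complex.abs (z ^ x.2 - 1)) - (x.2 : ℝ) * Real.log r)| :=
        Finset.abs_sum_le_sum_abs _ _
    _ ≤ ∑ x ∈ m.divisorsAntidiagonal, |((moebius x.1 : ℤ) : ℝ)| * C := by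
        refine Finset.sum_le_sum fun x hx => ?_
        rw [abs_mul]
        refine mul_le_mul_of_nonneg_left ?_ (abs_nonneg _)
        have hb : 0 < x.2 := by
          have h := (Nat.mem_divisorsAntidiagonal.mp hx)
          rcases Nat.eq_zero_or_pos x.2 with h0 | h0
          · exfalso; rw [h0, mul_zero] at h; exact hm.ne' h.1.symm
          · exact h0
        exact term_bound hb hz
    _ = (2 ^ m.primeFactors.card : ℝ) * C := by
        rw [← Finset.sum_mul, moebius_abs_sum m hm]

private lemma C_le {m : ℕ} (hm : 0 < m) {r : ℝ} (hr : 1 + 1/(m:ℝ) ≤ r) :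
    max (Real.log 2) (Real.log (r / (r - 1))) ≤ Real.log ((m:ℝ) + 1) := by
  have hm1 : (1:ℝ) ≤ m := by exact_mod_cast hm
  have hminv : (0:ℝ) < 1/(m:ℝ) := by positivity
  have hr1 : 1 < r := by linarith
  have hrm : (m:ℝ) * (1/(m:ℝ)) = 1 := by field_simp
  refine max_le ?_ ?_
  · exact Real.log_le_log two_pos (by linarith)
  · refine Real.log_le_log (div_pos (by linarith) (by linarith)) ?_
    rw [div_le_iff₀ (by linarith)]
    nlinarith [mul_nonneg (by linarith : (0:ℝ) ≤ (m:ℝ))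
      (by linarith : (0:ℝ) ≤ r - 1 - 1/(m:ℝ))]

private lemma log_mono0 {x y : ℝ} (h : x ≤ y) (hx : 0 ≤ x) (hy : 1 ≤ y) :
    Real.log x ≤ Real.log y := by
  rcases eq_or_lt_of_le hx with h0 | h0
  · rw [← h0, Real.log_zero]; exact Real.log_nonneg hy
  · exact Real.log_le_log h0 h

/-- For every positive integer `m` and every complex `z`,
`|log⁺|Φ_m(z)| - φ(m)·log⁺|z|| ≤ 2 ^ ω(m) · log (π m)`, where `log⁺ t = max (log t) 0`. -/
theorem cyclotomic_logplus_approx (m : ℕ) (hm : 0 < m) (z : ℂ) :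
    |max (Real.log ‖(Polynomial.cyclotomic m ℂ).eval z‖) 0 -
        (Nat.totient m : ℝ) * max (Real.log ‖z‖) 0| ≤
      (2 ^ m.primeFactors.card : ℝ) * Real.log (Real.pi * m) := by
  change |max (Real.log (Complex.abs ((Polynomial.cyclotomic m ℂ).eval z))) 0 -
        (Nat.totient m : ℝ) * max (Real.log (Complex.abs z)) 0| ≤
      (2 ^ m.primeFactors.card : ℝ) * Real.log (Real.pi * m)
  have hm1 : (1:ℝ) ≤ m := by exact_mod_cast hm
  have hmpos : (0:ℝ) < m := by linarith
  have hr0 : 0 ≤ Complex.abs z := AbsoluteValue.nonneg _ _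
  have hpow1 : (1:ℝ) ≤ 2 ^ m.primeFactors.card := one_le_pow₀ one_le_two
  have hpow0 : (0:ℝ) ≤ 2 ^ m.primeFactors.card := by linarith
  have hpi : (3:ℝ) < Real.pi := Real.pi_gt_three
  have hlogpim : 1 ≤ Real.log (Real.pi * m) := by
    rw [Real.le_log_iff_exp_le (by positivity)]
    nlinarith [Real.exp_one_lt_d9]
  set B := (2 ^ m.primeFactors.card : ℝ) * Real.log (Real.pi * m) with hBdef
  have hB1 : 1 ≤ B := by nlinarith
  have hB0 : 0 ≤ B := by linarith
  have hlog_m1 : Real.log ((m:ℝ)+1) ≤ Real.log (Real.pi * m) :=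
    Real.log_le_log (by positivity) (by nlinarith)
  by_cases hcase : 1 + 1/(m:ℝ) ≤ Complex.abs z
  · -- |z| ≥ 1 + 1/m
    have hminv : (0:ℝ) < 1/(m:ℝ) := by positivity
    have hr1 : 1 < Complex.abs z := by linarith
    have hlogr : 0 ≤ Real.log (Complex.abs z) := Real.log_nonneg hr1.le
    rw [max_eq_left hlogr]
    have hEst : |Real.log (Complex.abs ((cyclotomic m ℂ).eval z)) -
        (m.totient:ℝ) * Real.log (Complex.abs z)| ≤ B := by
      refine le_trans (master hm hr1) ?_
      refine le_trans (mul_le_mul_of_nonneg_left (C_le hm hcase) hpow0) ?_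
      exact mul_le_mul_of_nonneg_left hlog_m1 hpow0
    rw [abs_le] at hEst ⊢
    obtain ⟨hlo, hhi⟩ := hEst
    have hφr : 0 ≤ (m.totient:ℝ) * Real.log (Complex.abs z) :=
      mul_nonneg (by positivity) hlogr
    constructor
    · have h2 : Real.log (Complex.abs ((cyclotomic m ℂ).eval z))
          ≤ max (Real.log (Complex.abs ((cyclotomic m ℂ).eval z))) 0 := le_max_left _ _
      linarith
    · have h3 : max (Real.log (Complex.abs ((cyclotomic m ℂ).eval z))) 0
          ≤ (m.totient:ℝ) * Real.log (Complex.abs z) + B :=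
        max_le (by linarith) (by linarith)
      linarith
  · -- |z| < 1 + 1/m
    push_neg at hcase
    have hminv : (0:ℝ) < 1/(m:ℝ) := by positivity
    have hlogR : Real.log (1 + 1/(m:ℝ)) ≤ 1/(m:ℝ) := by
      have := Real.log_le_sub_one_of_pos (x := 1 + 1/(m:ℝ)) (by positivity)
      linarith
    have hφm : (m.totient:ℝ) ≤ m := by exact_mod_cast Nat.totient_le m
    have hmaxle : max (Real.log (Complex.abs z)) 0 ≤ 1/(m:ℝ) := by
      refine max_le ?_ (by positivity)
      refine le_trans (log_mono0 hcase.le hr0 (by linarith)) hlogR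
    have hτ1 : (m.totient:ℝ) * max (Real.log (Complex.abs z)) 0 ≤ 1 := by
      calc (m.totient:ℝ) * max (Real.log (Complex.abs z)) 0
          ≤ (m:ℝ) * (1/(m:ℝ)) :=
            mul_le_mul hφm hmaxle (le_max_right _ _) hmpos.le
        _ = 1 := by field_simp
    have hτ0 : 0 ≤ (m.totient:ℝ) * max (Real.log (Complex.abs z)) 0 :=
      mul_nonneg (by positivity) (le_max_right _ _)
    have hX : max (Real.log (Complex.abs ((cyclotomic m ℂ).eval z))) 0 ≤ B := by
      rcases eq_or_lt_of_le (Nat.succ_le_of_lt hm) with h1 | h2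
      · -- m = 1
        have hm' : m = 1 := h1.symm
        subst hm'
        simp only [cyclotomic_one, eval_sub, eval_X, eval_one]
        refine max_le ?_ hB0
        have habs : Complex.abs (z - 1) ≤ 3 := by
          have := norm_sub_le z (1 : ℂ)
          simp only [Complex.norm_eq_abs, norm_one] at this
          norm_num at hcase
          linarith
        refine le_trans (log_mono0 habs (AbsoluteValue.nonneg _ _) (by norm_num)) ?_
        have h3 : Real.log 3 ≤ Real.log (Real.pi * 1) :=
          Real.log_le_log (by norm_num) (by linarith)
        simpa [hBdef] using h3
      · -- m ≥ 2
        have hm2 : 2 ≤ m := h2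
        have hm2R : (2:ℝ) ≤ m := by exact_mod_cast hm2
        have hω1 : 1 ≤ m.primeFactors.card :=
          Finset.card_pos.mpr (Nat.nonempty_primeFactors.mpr (by omega))
        have h2ω : (2:ℝ) ≤ 2 ^ m.primeFactors.card := by
          calc (2:ℝ) = 2 ^ 1 := (pow_one 2).symm
            _ ≤ 2 ^ m.primeFactors.card := pow_le_pow_right₀ one_le_two hω1
        set R := 1 + 1/(m:ℝ) with hRdef
        have hR1 : 1 < R := by simp only [hRdef]; linarith
        have hRpos : 0 < R := by linarith
        -- the total bound on the circle of radius R
        have ht : (m.totient:ℝ) * Real.log R + (2 ^ m.primeFactors.card : ℝ) *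
            Real.log ((m:ℝ)+1) ≤ B := by
          have hφR : (m.totient:ℝ) * Real.log R ≤ 1 := by
            calc (m.totient:ℝ) * Real.log R ≤ (m:ℝ) * (1/(m:ℝ)) :=
                mul_le_mul hφm hlogR (Real.log_nonneg hR1.le) hmpos.le
              _ = 1 := by field_simp
          have hdiff : (1:ℝ)/2 ≤ Real.log (Real.pi * m) - Real.log ((m:ℝ)+1) := by
            have hq : Real.log (((m:ℝ)+1) / (Real.pi * m))
                ≤ ((m:ℝ)+1)/(Real.pi*m) - 1 :=
              Real.log_le_sub_one_of_pos (by positivity)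
            have hlogdiv : Real.log (((m:ℝ)+1) / (Real.pi * m))
                = Real.log ((m:ℝ)+1) - Real.log (Real.pi*m) :=
              Real.log_div (by positivity) (by positivity)
            have hfrac : ((m:ℝ)+1)/(Real.pi*m) ≤ 1/2 := by
              rw [div_le_iff₀ (by positivity)]
              nlinarith
            linarith
          have hmm : (2:ℝ) * (1/2) ≤ (2 ^ m.primeFactors.card : ℝ) *
              (Real.log (Real.pi * m) - Real.log ((m:ℝ)+1)) :=
            mul_le_mul h2ω hdiff (by norm_num) (by linarith)
          have hsplit : B = (2 ^ m.primeFactors.card : ℝ) *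
              (Real.log (Real.pi * m) - Real.log ((m:ℝ)+1)) +
              (2 ^ m.primeFactors.card : ℝ) * Real.log ((m:ℝ)+1) := by ring
          linarith
        have hcirc : ∀ w : ℂ, Complex.abs w = R →
            Complex.abs ((cyclotomic m ℂ).eval w) ≤ Real.exp B := by
          intro w hw
          have hw1 : 1 < Complex.abs w := by rw [hw]; exact hR1
          have h6 := (abs_le.mp (master hm hw1)).2
          have hCw : max (Real.log 2) (Real.log (Complex.abs w / (Complex.abs w - 1)))
              ≤ Real.log ((m:ℝ) + 1) := C_le hm (le_of_eq hw.symm)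
          have h7 : (2 ^ m.primeFactors.card : ℝ) *
              max (Real.log 2) (Real.log (Complex.abs w / (Complex.abs w - 1)))
              ≤ (2 ^ m.primeFactors.card : ℝ) * Real.log ((m:ℝ)+1) :=
            mul_le_mul_of_nonneg_left hCw hpow0
          rw [hw] at h6 h7
          have h5 : Real.log (Complex.abs ((cyclotomic m ℂ).eval w)) ≤ B := by linarith
          have hposw : 0 < Complex.abs ((cyclotomic m ℂ).eval w) :=
            Complex.abs.pos (eval_cyclo_ne_zero hm hw1)
          rwa [← Real.log_le_iff_le_exp hposw]
        have hmaxmod : Complex.abs ((cyclotomic m ℂ).eval z) ≤ Real.exp B := by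
          have hle := Complex.norm_le_of_forall_mem_frontier_norm_le
            (U := Metric.ball (0:ℂ) R) (f := fun w => (cyclotomic m ℂ).eval w)
            Metric.isBounded_ball
            ((Polynomial.differentiable _).diffContOnCl)
            (C := Real.exp B) ?_ (z := z) ?_
          · simpa [Complex.norm_eq_abs] using hle
          · intro w hw
            rw [frontier_ball (0:ℂ) (ne_of_gt hRpos)] at hw
            have hwR : Complex.abs w = R := by
              simpa [Complex.norm_eq_abs] using mem_sphere_zero_iff_norm.mp hw
            simpa [Complex.norm_eq_abs] using hcirc w hwR
          · refine subset_closure ?_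
            rw [Metric.mem_ball]
            simpa [Complex.dist_eq, Complex.norm_eq_abs] using hcase
        refine max_le ?_ hB0
        have := log_mono0 hmaxmod (AbsoluteValue.nonneg _ _) (Real.one_le_exp hB0)
        rwa [Real.log_exp] at this
    rw [abs_le]
    constructor
    · have h4 : 0 ≤ max (Real.log (Complex.abs ((cyclotomic m ℂ).eval z))) 0 :=
        le_max_right _ _
      linarith
    · linarith
end

section
/- Let K be a number field, p a prime number, 𝔭 a prime of K above p with ramification index e = v_𝔭(p), and ξ ∈ K with v_𝔭(ξ - 1) > e/(p-1). Then for every positive integer n, v_𝔭(ξ^n - 1) = v_𝔭(ξ - 1) + v_𝔭(n). -/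
open NumberField IsDedekindDomain
open scoped Classical

/-- The additive `𝔭`-adic valuation of a nonzero element of a number field
(junk value `0` at `x = 0`). -/
noncomputable def addVal (K : Type*) [Field K] [NumberField K]
    (v : HeightOneSpectrum (𝓞 K)) (x : K) : ℤ :=
  if hx : x = 0 then 0
  else -Multiplicative.toAdd (WithZero.unzero ((v.valuation K).ne_zero_iff.mpr hx))

/-- The normalized `𝔭`-adic absolute value `|x|_𝔭 = N(𝔭) ^ (-v_𝔭(x))`. -/
noncomputable def finAbs (K : Type*) [Field K] [NumberField K]
    (v : HeightOneSpectrum (𝓞 K)) (x : K) : ℝ :=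
  if x = 0 then 0 else (Ideal.absNorm v.asIdeal : ℝ) ^ (-(addVal K v x))

/-- The projective absolute logarithmic Weil height of a (nonzero) vector of
elements of a number field `K`:
`h(α) = d⁻¹ (∑_{w ∣ ∞} d_w log max_i |α_i|_w + ∑_𝔭 log max_i |α_i|_𝔭)`. -/
noncomputable def projHeight (K : Type*) [Field K] [NumberField K]
    {ι : Type*} [Fintype ι] [Nonempty ι] (α : ι → K) : ℝ :=
  (Module.finrank ℚ K : ℝ)⁻¹ *
    ((∑ w : InfinitePlace K, (w.mult : ℝ) *
        Real.log (Finset.univ.sup' Finset.univ_nonempty (fun i => w (α i)))) +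
     ∑ᶠ v : HeightOneSpectrum (𝓞 K),
        Real.log (Finset.univ.sup' Finset.univ_nonempty (fun i => finAbs K v (α i))))

/-- The absolute logarithmic Weil height of an algebraic number `x`, `h(x) = h(1 : x)`. -/
noncomputable def heightK (K : Type*) [Field K] [NumberField K] (x : K) : ℝ :=
  projHeight K ![1, x]

/-- `h(1, f)`: the projective height of the vector made of `1` together with the
coefficients of `f` (in degrees `0, …, D`). -/
noncomputable def polyHeight1 (K : Type*) [Field K] [NumberField K]
    (D : ℕ) (f : Polynomial K) : ℝ :=
  projHeight K (fun i : Fin (D + 2) => if i.val = 0 then 1 else f.coeff (i.val - 1))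

namespace AV
variable {K : Type*} [Field K] [NumberField K] (v : HeightOneSpectrum (𝓞 K))

noncomputable def γ (a : ℤ) : WithZero (Multiplicative ℤ) :=
  ((Multiplicative.ofAdd (-a) : Multiplicative ℤ) : WithZero (Multiplicative ℤ))

lemma γ_mul (a b : ℤ) : γ a * γ b = γ (a + b) := by
  unfold γ; rw [← WithZero.coe_mul, ← ofAdd_add, neg_add]

lemma γ_lt (a b : ℤ) : γ a < γ b ↔ b < a := by
  unfold γ; rw [WithZero.coe_lt_coe, Multiplicative.ofAdd_lt]; omega

lemma γ_le (a b : ℤ) : γ a ≤ γ b ↔ b ≤ a := by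
  unfold γ; rw [WithZero.coe_le_coe, Multiplicative.ofAdd_le]; omega

lemma γ_ne_zero (a : ℤ) : γ a ≠ 0 := WithZero.coe_ne_zero

lemma γ_zero : γ 0 = 1 := by simp [γ]

lemma γ_inj {a b : ℤ} (h : γ a = γ b) : a = b := by
  unfold γ at h; rw [WithZero.coe_inj] at h
  have := Multiplicative.ofAdd.injective h; omega

lemma val_eq {x : K} (hx : x ≠ 0) : v.valuation K x = γ (addVal K v x) := by
  rw [addVal, dif_neg hx, γ, neg_neg, ofAdd_toAdd, WithZero.coe_unzero]

lemma addVal_eq {x : K} (hx : x ≠ 0) {a : ℤ} (h : v.valuation K x = γ a) :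
    addVal K v x = a := γ_inj ((val_eq v hx).symm.trans h)

lemma addVal_one : addVal K v (1 : K) = 0 :=
  addVal_eq v one_ne_zero (by simp [γ_zero])

lemma addVal_mul {x y : K} (hx : x ≠ 0) (hy : y ≠ 0) :
    addVal K v (x * y) = addVal K v x + addVal K v y :=
  addVal_eq v (mul_ne_zero hx hy)
    (by rw [Valuation.map_mul, val_eq v hx, val_eq v hy, γ_mul])

end AV

namespace AV
variable {K : Type*} [Field K] [NumberField K] (v : HeightOneSpectrum (𝓞 K))

lemma γ_pow (a : ℤ) (k : ℕ) : γ a ^ k = γ (k * a) := by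
  induction k with
  | zero => simp [γ_zero]
  | succ k ih => rw [pow_succ, ih, γ_mul]; push_cast; ring_nf

lemma addVal_pow {x : K} (hx : x ≠ 0) (k : ℕ) :
    addVal K v (x ^ k) = k * addVal K v x := by
  induction k with
  | zero => simpa using addVal_one v
  | succ k ih =>
    rw [pow_succ, addVal_mul v (pow_ne_zero _ hx) hx, ih]; push_cast; ring

lemma val_natCast_le_one (m : ℕ) : v.valuation K (m : K) ≤ 1 := by
  have h : (algebraMap (𝓞 K) K) (m : 𝓞 K) = (m : K) := map_natCast _ m
  rw [← h]; exact v.valuation_le_one _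

lemma addVal_natCast_nonneg {m : ℕ} (hm : m ≠ 0) : 0 ≤ addVal K v (m : K) := by
  have hm0 : (m : K) ≠ 0 := Nat.cast_ne_zero.mpr hm
  have := val_natCast_le_one v (K := K) m
  rw [val_eq v hm0, ← γ_zero, γ_le] at this
  exact this

lemma addVal_natCast_pos {m : ℕ} (hm : (m : 𝓞 K) ∈ v.asIdeal) (hm0 : m ≠ 0) :
    0 < addVal K v (m : K) := by
  have hmK : (m : K) ≠ 0 := Nat.cast_ne_zero.mpr hm0
  have h : (algebraMap (𝓞 K) K) (m : 𝓞 K) = (m : K) := map_natCast _ m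
  have hlt : v.valuation K (m : K) < 1 := by
    rw [← h, v.valuation_lt_one_iff_dvd, Ideal.dvd_span_singleton]
    exact hm
  rw [val_eq v hmK, ← γ_zero, γ_lt] at hlt
  exact hlt

lemma addVal_natCast_eq_zero {m : ℕ} (hm : (m : 𝓞 K) ∉ v.asIdeal) (hm0 : m ≠ 0) :
    addVal K v (m : K) = 0 := by
  have hmK : (m : K) ≠ 0 := Nat.cast_ne_zero.mpr hm0
  have h : (algebraMap (𝓞 K) K) (m : 𝓞 K) = (m : K) := map_natCast _ m
  have hge : ¬ v.valuation K (m : K) < 1 := by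
    rw [← h, v.valuation_lt_one_iff_dvd, Ideal.dvd_span_singleton]
    exact hm
  have hle := addVal_natCast_nonneg v (K := K) hm0
  rw [val_eq v hmK, ← γ_zero, γ_lt] at hge
  omega

lemma not_mem_of_prime_ne {p q : ℕ} (hp : p.Prime) (hq : q.Prime)
    (hne : q ≠ p) (hpv : (p : 𝓞 K) ∈ v.asIdeal) : (q : 𝓞 K) ∉ v.asIdeal := by
  intro hqv
  have hcop : IsCoprime (p : ℤ) (q : ℤ) :=
    Int.isCoprime_iff_gcd_eq_one.mpr (by
      simpa [Int.gcd] using (Nat.coprime_primes hp hq).mpr (Ne.symm hne))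
  have hcop2 : IsCoprime ((p : ℤ) : 𝓞 K) ((q : ℤ) : 𝓞 K) := hcop.map (algebraMap ℤ (𝓞 K))
  obtain ⟨a, b, hab⟩ := hcop2
  have : (1 : 𝓞 K) ∈ v.asIdeal := by
    rw [← hab]
    push_cast
    exact v.asIdeal.add_mem (Ideal.mul_mem_left _ _ hpv) (Ideal.mul_mem_left _ _ hqv)
  exact v.isPrime.ne_top (v.asIdeal.eq_top_of_isUnit_mem this isUnit_one)

end AV

namespace AV
variable {K : Type*} [Field K] [NumberField K] (v : HeightOneSpectrum (𝓞 K))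

lemma step {p : ℕ} (hp : p.Prime) (hpv : (p : 𝓞 K) ∈ v.asIdeal)
    {e : ℤ} (he : e = addVal K v (p : K))
    {ξ : K} (hξ : ((p : ℤ) - 1) * addVal K v (ξ - 1) > e)
    {q : ℕ} (hq : q.Prime) :
    ξ ^ q - 1 ≠ 0 ∧
      addVal K v (ξ ^ q - 1) = addVal K v (ξ - 1) + addVal K v (q : K) ∧
      ((p : ℤ) - 1) * addVal K v (ξ ^ q - 1) > e := by
  have hp2 : (2 : ℤ) ≤ (p : ℤ) := by exact_mod_cast hp.two_le
  have hpK : ((p : K)) ≠ 0 := Nat.cast_ne_zero.mpr hp.ne_zero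
  have he1 : 1 ≤ e := by
    have := addVal_natCast_pos v (K := K) hpv hp.ne_zero
    omega
  have hπ : ξ - 1 ≠ 0 := by
    intro h
    rw [h] at hξ
    simp [addVal] at hξ
    omega
  set t : ℤ := addVal K v (ξ - 1) with ht
  have ht1 : 1 ≤ t := by nlinarith
  have hvπ : v.valuation K (ξ - 1) = γ t := val_eq v hπ
  have hvξ : v.valuation K ξ ≤ 1 := by
    have h1 : v.valuation K (ξ - 1 + 1) ≤ max (v.valuation K (ξ - 1)) (v.valuation K (1 : K)) :=
      Valuation.map_add _ _ _
    rw [sub_add_cancel, Valuation.map_one, hvπ] at h1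
    refine le_trans h1 (max_le ?_ le_rfl)
    rw [← γ_zero, γ_le]; omega
  have hgeom : ∀ j : ℕ, v.valuation K (∑ i ∈ Finset.range j, ξ ^ i) ≤ 1 := by
    intro j
    refine Valuation.map_sum_le _ fun i _ => ?_
    rw [map_pow]
    exact pow_le_one₀ zero_le' hvξ
  have hpowsub : ∀ j : ℕ, v.valuation K (ξ ^ j - 1) ≤ γ t := by
    intro j
    rw [← geom_sum_mul, Valuation.map_mul, hvπ]
    calc v.valuation K (∑ i ∈ Finset.range j, ξ ^ i) * γ t ≤ 1 * γ t :=
          mul_le_mul_left (hgeom j) _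
      _ = γ t := one_mul _
  by_cases hqp : q = p
  · -- q = p case
    subst hqp
    set f : ℕ → K := fun k => (ξ - 1) ^ k * (q.choose k : K) with hf
    have hxp : ξ ^ q = ∑ k ∈ Finset.range (q + 1), f k := by
      have h := add_pow (ξ - 1) 1 q
      simpa [hf, sub_add_cancel] using h
    have hsplit : ξ ^ q - 1 = (ξ - 1) * (q : K) + ∑ k ∈ Finset.Ico 2 (q + 1), f k := by
      have h2 : (2 : ℕ) ≤ q := hq.two_le
      rw [hxp, Finset.range_eq_Ico,
        Finset.sum_eq_sum_Ico_succ_bot (by omega : 0 < q + 1),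
        Finset.sum_eq_sum_Ico_succ_bot (by omega : 1 < q + 1)]
      simp only [hf, pow_zero, pow_one, Nat.choose_zero_right, Nat.choose_one_right]
      push_cast
      ring
    have hvppi : v.valuation K ((ξ - 1) * (q : K)) = γ (t + e) := by
      rw [Valuation.map_mul, hvπ, val_eq v hpK, ← he, γ_mul]
    have hR : v.valuation K (∑ k ∈ Finset.Ico 2 (q + 1), f k) < γ (t + e) := by
      refine Valuation.map_sum_lt _ (γ_ne_zero _) fun k hk => ?_
      rw [Finset.mem_Ico] at hk
      obtain ⟨hk2, hk3⟩ := hk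
      rw [hf, Valuation.map_mul, map_pow, hvπ, γ_pow]
      rcases eq_or_lt_of_le (by omega : k ≤ q) with hkq | hkq
      · subst hkq
        rw [Nat.choose_self]
        simp only [Nat.cast_one, Valuation.map_one, mul_one]
        rw [γ_lt]
        have hk2' : (2 : ℤ) ≤ (k : ℤ) := by exact_mod_cast hk2
        nlinarith
      · -- k < q, so q ∣ choose q k
        obtain ⟨m, hm⟩ := hp.dvd_choose_self (by omega) hkq
        have hcast : ((q.choose k : ℕ) : K) = (q : K) * (m : K) := by
          rw [hm]; push_cast; ring
        rw [hcast, Valuation.map_mul, val_eq v hpK, ← he]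
        calc γ ((k : ℤ) * t) * (γ e * v.valuation K (m : K))
            ≤ γ ((k : ℤ) * t) * (γ e * 1) :=
              mul_le_mul_right (mul_le_mul_right (val_natCast_le_one v m) _) _
          _ = γ ((k : ℤ) * t + e) := by rw [mul_one, γ_mul]
          _ < γ (t + e) := by
              rw [γ_lt]
              have hk2' : (2 : ℤ) ≤ (k : ℤ) := by exact_mod_cast hk2
              nlinarith
    have hval : v.valuation K (ξ ^ q - 1) = γ (t + e) := by
      rw [hsplit, Valuation.map_add_eq_of_lt_left _ (by rw [hvppi]; exact hR), hvppi]
    have hne : ξ ^ q - 1 ≠ 0 := by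
      rw [← Valuation.ne_zero_iff (v.valuation K), hval]; exact γ_ne_zero _
    have haddv : addVal K v (ξ ^ q - 1) = t + e := addVal_eq v hne hval
    refine ⟨hne, ?_, ?_⟩
    · rw [haddv, ← he]
    · rw [haddv]; nlinarith
  · -- q ≠ p case
    have hqK : ((q : K)) ≠ 0 := Nat.cast_ne_zero.mpr hq.ne_zero
    have hq0 : addVal K v (q : K) = 0 :=
      addVal_natCast_eq_zero v (not_mem_of_prime_ne v hp hq hqp hpv) hq.ne_zero
    set S : K := ∑ i ∈ Finset.range q, ξ ^ i with hS
    have hSq : v.valuation K (S - (q : K)) < 1 := by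
      have hrw : S - (q : K) = ∑ i ∈ Finset.range q, (ξ ^ i - 1) := by
        rw [Finset.sum_sub_distrib, Finset.sum_const, Finset.card_range, hS]
        simp
      rw [hrw]
      refine Valuation.map_sum_lt _ one_ne_zero fun i _ => ?_
      refine lt_of_le_of_lt (hpowsub i) ?_
      rw [← γ_zero, γ_lt]; omega
    have hvq : v.valuation K (q : K) = 1 := by
      rw [val_eq v hqK, hq0, γ_zero]
    have hvS : v.valuation K S = 1 := by
      have h := Valuation.map_add_eq_of_lt_left (v.valuation K)
        (x := (q : K)) (y := S - (q : K)) (by rw [hvq]; exact hSq)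
      rw [add_sub_cancel, hvq] at h
      exact h
    have hSne : S ≠ 0 := by
      rw [← Valuation.ne_zero_iff (v.valuation K), hvS]; exact one_ne_zero
    have hfact : ξ ^ q - 1 = S * (ξ - 1) := (geom_sum_mul ξ q).symm
    have hne : ξ ^ q - 1 ≠ 0 := by rw [hfact]; exact mul_ne_zero hSne hπ
    have haddS : addVal K v S = 0 := addVal_eq v hSne (by rw [hvS, γ_zero])
    have haddv : addVal K v (ξ ^ q - 1) = t := by
      rw [hfact, addVal_mul v hSne hπ, haddS, zero_add]
    refine ⟨hne, ?_, ?_⟩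
    · rw [haddv, hq0, add_zero]
    · rw [haddv]; exact hξ

end AV


/-- If `𝔭` lies above `p` with ramification index `e = v_𝔭(p)` and
`v_𝔭(ξ - 1) > e/(p-1)`, then `v_𝔭(ξ^n - 1) = v_𝔭(ξ - 1) + v_𝔭(n)` for all `n ≥ 1`. -/
theorem addVal_pow_sub_one (K : Type*) [Field K] [NumberField K]
    (p : ℕ) (hp : p.Prime) (v : HeightOneSpectrum (𝓞 K))
    (hpv : (p : 𝓞 K) ∈ v.asIdeal)
    (e : ℤ) (he : e = addVal K v (p : K))
    (ξ : K) (hξ : ((p : ℤ) - 1) * addVal K v (ξ - 1) > e)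
    (n : ℕ) (hn : 0 < n) :
    addVal K v (ξ ^ n - 1) = addVal K v (ξ - 1) + addVal K v (n : K) := by
  have main : ∀ n : ℕ, 0 < n → ∀ ξ : K, ((p : ℤ) - 1) * addVal K v (ξ - 1) > e →
      addVal K v (ξ ^ n - 1) = addVal K v (ξ - 1) + addVal K v (n : K) := by
    intro n
    induction n using Nat.strong_induction_on with
    | _ n IH =>
      intro hn ξ hξ'
      by_cases hn1 : n = 1
      · subst hn1
        simp [AV.addVal_one v]
      · set q := n.minFac with hqdef
        have hq : q.Prime := Nat.minFac_prime hn1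
        obtain ⟨m, hm⟩ : q ∣ n := n.minFac_dvd
        have hm0 : 0 < m := by
          rcases Nat.eq_zero_or_pos m with h | h
          · subst h; simp at hm; omega
          · exact h
        have hq2 : 2 ≤ q := hq.two_le
        have hmn : m < n := by
          calc m < 2 * m := by omega
            _ ≤ q * m := Nat.mul_le_mul_right m hq2
            _ = n := hm.symm
        obtain ⟨hne, hstep, hhyp⟩ := AV.step v hp hpv he hξ' hq
        have hIH := IH m hmn hm0 (ξ ^ q) hhyp
        have hpow : ξ ^ n = (ξ ^ q) ^ m := by rw [← pow_mul, ← hm]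
        have hcast : addVal K v (n : K) =
            addVal K v ((q : K)) + addVal K v ((m : K)) := by
          rw [hm, Nat.cast_mul]
          exact AV.addVal_mul v (Nat.cast_ne_zero.mpr hq.ne_zero)
            (Nat.cast_ne_zero.mpr hm0.ne')
        rw [hpow, hIH, hstep, hcast]
        ring
  exact main n hn ξ hξ
end

section
/- Let f₁, f₂ ∈ ℂ[x] have degrees at most D and all coefficients bounded in absolute value by H ≥ 1. Let ξ ∈ ℂ satisfy |ξ| ≤ 1, f₁(ξ) = 0, and f₂(ξ) = δ ≠ 0. Set ε = min(|δ|, 1)/(3D²H). Then for every z ∈ ℂ with |z - ξ| ≤ ε, one has |f₁(z)| ≤ (1/2)|f₂(z)|. -/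
set_option maxHeartbeats 1000000

open Finset Polynomial

/-- Lipschitz-type bound for polynomial evaluation near a point of the unit disc. -/
lemma eval_diff_bound (f : Polynomial ℂ) (D : ℕ) (hD : 1 ≤ D) (hdf : f.natDegree ≤ D)
    (H : ℝ) (hH : 1 ≤ H) (hcf : ∀ i, ‖f.coeff i‖ ≤ H)
    (z ξ : ℂ) (hξ : ‖ξ‖ ≤ 1) (ε : ℝ) (hε0 : 0 ≤ ε)
    (hz : ‖z - ξ‖ ≤ ε) :
    ‖f.eval z - f.eval ξ‖ ≤
      H * ε * (D * (D + 1) / 2) * (1 + ε) ^ (D - 1) := by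
  have hz1 : ‖z‖ ≤ 1 + ε := by
    calc ‖z‖ = ‖(z - ξ) + ξ‖ := by ring_nf
    _ ≤ ‖z - ξ‖ + ‖ξ‖ := norm_add_le _ _
    _ ≤ ε + 1 := add_le_add hz hξ
    _ = 1 + ε := by ring
  have h1ε : (1:ℝ) ≤ 1 + ε := by linarith
  have heval : ∀ w : ℂ, f.eval w = ∑ i ∈ range (D + 1), f.coeff i * w ^ i := fun w =>
    eval_eq_sum_range' (lt_of_le_of_lt hdf (Nat.lt_succ_self D)) w
  -- bound on each power difference
  have hdiff : ∀ i ∈ range (D + 1),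
      ‖f.coeff i * (z ^ i - ξ ^ i)‖ ≤
        H * (ε * i * (1 + ε) ^ (D - 1)) := by
    intro i hi
    rw [mem_range, Nat.lt_succ_iff] at hi
    have hgeom : ‖z ^ i - ξ ^ i‖ ≤ ε * i * (1 + ε) ^ (D - 1) := by
      rw [← geom_sum₂_mul z ξ i, norm_mul]
      have hsum : ‖∑ j ∈ range i, z ^ j * ξ ^ (i - 1 - j)‖ ≤
          i * (1 + ε) ^ (D - 1) := by
        calc ‖∑ j ∈ range i, z ^ j * ξ ^ (i - 1 - j)‖
            ≤ ∑ j ∈ range i, ‖z ^ j * ξ ^ (i - 1 - j)‖ :=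
              norm_sum_le _ _
        _ ≤ ∑ _j ∈ range i, (1 + ε) ^ (D - 1) := by
            apply Finset.sum_le_sum
            intro j hj
            rw [mem_range] at hj
            rw [norm_mul, norm_pow, norm_pow]
            have h1 : ‖z‖ ^ j ≤ (1 + ε) ^ (D - 1) := by
              calc ‖z‖ ^ j ≤ (1 + ε) ^ j :=
                    pow_le_pow_left₀ (norm_nonneg _) hz1 j
              _ ≤ (1 + ε) ^ (D - 1) := by
                  apply pow_le_pow_right₀ h1ε
                  omega
            have h2 : ‖ξ‖ ^ (i - 1 - j) ≤ 1 := by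
              apply pow_le_one₀ (norm_nonneg _) hξ
            calc ‖z‖ ^ j * ‖ξ‖ ^ (i - 1 - j)
                ≤ (1 + ε) ^ (D - 1) * 1 := by
                  apply mul_le_mul h1 h2 (by positivity) (by positivity)
            _ = (1 + ε) ^ (D - 1) := mul_one _
        _ = i * (1 + ε) ^ (D - 1) := by
            rw [Finset.sum_const, card_range, nsmul_eq_mul]
      calc ‖∑ j ∈ range i, z ^ j * ξ ^ (i - 1 - j)‖ * ‖z - ξ‖
          ≤ (i * (1 + ε) ^ (D - 1)) * ε := by
            apply mul_le_mul hsum hz (norm_nonneg _) (by positivity)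
      _ = ε * i * (1 + ε) ^ (D - 1) := by ring
    rw [norm_mul]
    apply mul_le_mul (hcf i) hgeom (norm_nonneg _) (by linarith)
  have hgauss : ∑ i ∈ range (D + 1), (i : ℝ) = D * (D + 1) / 2 := by
    have := Finset.sum_range_id_mul_two (D + 1)
    have hcast : ((∑ i ∈ range (D + 1), i : ℕ) : ℝ) * 2 = (D + 1) * D := by
      exact_mod_cast congrArg (fun n : ℕ => (n : ℝ)) this
    push_cast at hcast ⊢
    linarith
  calc ‖f.eval z - f.eval ξ‖
      = ‖∑ i ∈ range (D + 1), f.coeff i * (z ^ i - ξ ^ i)‖ := by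
        rw [heval z, heval ξ, ← Finset.sum_sub_distrib]
        congr 1
        apply Finset.sum_congr rfl
        intro i _
        ring
  _ ≤ ∑ i ∈ range (D + 1), ‖f.coeff i * (z ^ i - ξ ^ i)‖ :=
        norm_sum_le _ _
  _ ≤ ∑ i ∈ range (D + 1), H * (ε * i * (1 + ε) ^ (D - 1)) :=
        Finset.sum_le_sum hdiff
  _ = H * ε * (∑ i ∈ range (D + 1), (i : ℝ)) * (1 + ε) ^ (D - 1) := by
        simp only [Finset.mul_sum, Finset.sum_mul]
        apply Finset.sum_congr rfl
        intro i _
        ring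
  _ = H * ε * (D * (D + 1) / 2) * (1 + ε) ^ (D - 1) := by rw [hgauss]

/-- Let `f₁, f₂ ∈ ℂ[x]` have degrees at most `D ≥ 1` and coefficients bounded by
`H ≥ 1`, let `|ξ| ≤ 1` with `f₁(ξ) = 0` and `f₂(ξ) = δ ≠ 0`, and set
`ε = min(|δ|,1)/(3D²H)`. Then `|z - ξ| ≤ ε` implies `|f₁(z)| ≤ (1/2)|f₂(z)|`. -/
theorem abs_eval_le_half (f₁ f₂ : Polynomial ℂ) (D : ℕ) (hD : 1 ≤ D)
    (hdeg₁ : f₁.natDegree ≤ D) (hdeg₂ : f₂.natDegree ≤ D)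
    (H : ℝ) (hH : 1 ≤ H)
    (hcoeff₁ : ∀ i, ‖f₁.coeff i‖ ≤ H)
    (hcoeff₂ : ∀ i, ‖f₂.coeff i‖ ≤ H)
    (ξ δ : ℂ) (hξ : ‖ξ‖ ≤ 1) (h₁ : f₁.eval ξ = 0)
    (h₂ : f₂.eval ξ = δ) (hδ : δ ≠ 0)
    (ε : ℝ) (hε : ε = min (‖δ‖) 1 / (3 * D ^ 2 * H))
    (z : ℂ) (hz : ‖z - ξ‖ ≤ ε) :
    ‖f₁.eval z‖ ≤ (1 / 2) * ‖f₂.eval z‖ := by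
  set m : ℝ := min (‖δ‖) 1 with hm
  have hδ0 : 0 < ‖δ‖ := norm_pos_iff.mpr hδ
  have hm0 : 0 < m := lt_min hδ0 one_pos
  have hm1 : m ≤ 1 := min_le_right _ _
  have hmδ : m ≤ ‖δ‖ := min_le_left _ _
  have hD1 : (1:ℝ) ≤ (D:ℝ) := by exact_mod_cast hD
  have hden : (0:ℝ) < 3 * (D:ℝ) ^ 2 * H := by positivity
  have hε0 : 0 < ε := by rw [hε]; positivity
  -- key identity : H * ε * (3 * D^2) = m
  have hkey : H * ε * (3 * (D:ℝ) ^ 2) = m := by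
    rw [hε]; field_simp
  have hεsmall : ε * (3 * (D:ℝ) ^ 2) ≤ 1 := by
    nlinarith
  -- bound on the Bernoulli-type factor
  set K : ℝ := (1 + ε) ^ (D - 1) with hK
  have hK0 : 0 < K := by positivity
  have hKb : K * (1 - (D - 1 : ℕ) * ε) ≤ 1 := by
    have hb : 1 + (D - 1 : ℕ) * (-ε) ≤ (1 + (-ε)) ^ (D - 1 : ℕ) :=
      one_add_mul_le_pow (by nlinarith) (D - 1)
    have hε1 : ε ≤ 1 := by nlinarith
    have hmul : K * (1 + (-ε)) ^ (D - 1 : ℕ) ≤ 1 := by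
      rw [hK, ← mul_pow]
      apply pow_le_one₀ (by nlinarith) (by nlinarith)
    nlinarith [pow_nonneg (by linarith : (0:ℝ) ≤ 1 + (-ε)) (D - 1)]
  have hcast : ((D - 1 : ℕ) : ℝ) = (D:ℝ) - 1 := by
    have : (1:ℕ) ≤ D := hD
    push_cast [this]
    ring
  rw [hcast] at hKb
  -- the crucial numeric bound : K * (D(D+1)/2) ≤ D^2
  have hKD : K * ((D:ℝ) * ((D:ℝ) + 1) / 2) ≤ (D:ℝ) ^ 2 := by
    have h1 : K * (1 - ((D:ℝ) - 1) / (3 * (D:ℝ) ^ 2)) ≤ 1 := by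
      have hle : ε ≤ 1 / (3 * (D:ℝ) ^ 2) := by
        rw [le_div_iff₀ (by positivity)]; linarith
      have : ((D:ℝ) - 1) * ε ≤ ((D:ℝ) - 1) / (3 * (D:ℝ) ^ 2) := by
        rw [div_eq_mul_inv, ← one_div]
        apply mul_le_mul_of_nonneg_left hle (by linarith)
      nlinarith
    have h2 : K * (3 * (D:ℝ) ^ 2 - ((D:ℝ) - 1)) ≤ 3 * (D:ℝ) ^ 2 := by
      have := mul_le_mul_of_nonneg_right h1 (le_of_lt (by positivity : (0:ℝ) < 3 * (D:ℝ)^2))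
      calc K * (3 * (D:ℝ) ^ 2 - ((D:ℝ) - 1))
          = K * (1 - ((D:ℝ) - 1) / (3 * (D:ℝ) ^ 2)) * (3 * (D:ℝ) ^ 2) := by
            field_simp
      _ ≤ 1 * (3 * (D:ℝ) ^ 2) := this
      _ = 3 * (D:ℝ) ^ 2 := one_mul _
    have h3 : (0:ℝ) < 3 * (D:ℝ) ^ 2 - ((D:ℝ) - 1) := by nlinarith
    have hquart : (0:ℝ) ≤ (D:ℝ) ^ 2 * ((3 * (D:ℝ) - 2) * ((D:ℝ) - 1)) :=
      mul_nonneg (sq_nonneg _) (mul_nonneg (by linarith) (by linarith))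
    nlinarith [mul_le_mul_of_nonneg_right h2
      (show (0:ℝ) ≤ (D:ℝ) * ((D:ℝ) + 1) / 2 by positivity), h3, hquart]
  -- hence both evaluations move by at most m/3
  have hmain : ∀ f : Polynomial ℂ, f.natDegree ≤ D → (∀ i, ‖f.coeff i‖ ≤ H) →
      ‖f.eval z - f.eval ξ‖ ≤ m / 3 := by
    intro f hdf hcf
    have := eval_diff_bound f D hD hdf H hH hcf z ξ hξ ε (le_of_lt hε0) hz
    calc ‖f.eval z - f.eval ξ‖
        ≤ H * ε * ((D:ℝ) * ((D:ℝ) + 1) / 2) * K := this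
    _ ≤ m / 3 := by
        have hme : (0:ℝ) ≤ H * ε := by positivity
        nlinarith [mul_le_mul_of_nonneg_left hKD hme]
  have hb₁ : ‖f₁.eval z‖ ≤ m / 3 := by
    have := hmain f₁ hdeg₁ hcoeff₁
    rwa [h₁, sub_zero] at this
  have hb₂ : ‖f₂.eval z - δ‖ ≤ m / 3 := by
    have := hmain f₂ hdeg₂ hcoeff₂
    rwa [h₂] at this
  have hlow : 2 * m / 3 ≤ ‖f₂.eval z‖ := by
    have htri : ‖δ‖ ≤ ‖f₂.eval z - δ‖ + ‖f₂.eval z‖ := by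
      have h' := norm_add_le (δ - f₂.eval z) (f₂.eval z)
      rw [sub_add_cancel, norm_sub_rev] at h'
      exact h'
    linarith
  linarith
end
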